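/- arXiv:1605.05499 — 5 statements merged into one kernel-verified Lean document; each statement's English description precedes it below -/
import Mathlib

section
/- Let G be an n-sum of multigraphs K and H along an n-element vertex set U (n ≥ 1), and let t, x, y be real numbers. Then f(G;t,x,y) = Σ_{A ∈ Γ(U)} f_A(K;t,x,y) · f(H/A;t,x,y). -/
attribute [local instance] Classical.propDecidable

/-- A multigraph: a finite vertex type, a finite edge index type, and an endpoint
map sending each edge to an unordered pair of vertices. -/
structure Multigraph where
  V : Type
  E : Type
  [finV : Fintype V]
  [finE : Fintype E]
  ends : E → Sym2 V

attribute [instance] Multigraph.finV Multigraph.finE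

namespace Multigraph

/-- Two vertices are related if some edge of `S` has them as its endpoints. -/
def rel (G : Multigraph) (S : Finset G.E) (v w : G.V) : Prop :=
  ∃ e ∈ S, G.ends e = s(v, w)

/-- `ω(S)`: the number of connected components of the spanning subgraph `(V(G), S)`. -/
noncomputable def omega (G : Multigraph) (S : Finset G.E) : ℕ :=
  Nat.card (Quotient (Relation.EqvGen.setoid (G.rel S)))

/-- `ω(G)`: the number of connected components of `G`. -/
noncomputable def omegaG (G : Multigraph) : ℕ :=
  G.omega Finset.univ

/-- The Negami polynomial `f(G;t,x,y)`. -/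
noncomputable def negami (G : Multigraph) (t x y : ℝ) : ℝ :=
  ∑ S : Finset G.E, t ^ G.omega S * x ^ S.card * y ^ (Fintype.card G.E - S.card)

/-- The Tutte polynomial `T(G;x,y)`. -/
noncomputable def tutte (G : Multigraph) (x y : ℝ) : ℝ :=
  ∑ S : Finset G.E,
    (x - 1) ^ (G.omega S - G.omegaG) *
      (y - 1) ^ (G.omega S + S.card - Fintype.card G.V)

end Multigraph

/-- The setoid on `V` extending a setoid `A` on the subset `U`: its nontrivial
classes are exactly the blocks of `A`. -/
def extendSetoid {V : Type} (U : Set V) (A : Setoid U) : Setoid V where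
  r v w := v = w ∨ ∃ (hv : v ∈ U) (hw : w ∈ U), A.r ⟨v, hv⟩ ⟨w, hw⟩
  iseqv := by
    constructor
    · exact fun v => Or.inl rfl
    · rintro v w (rfl | ⟨hv, hw, h⟩)
      · exact Or.inl rfl
      · exact Or.inr ⟨hw, hv, A.symm h⟩
    · rintro v w z (rfl | ⟨hv, hw, h⟩) (rfl | ⟨hw', hz, h'⟩)
      · exact Or.inl rfl
      · exact Or.inr ⟨hw', hz, h'⟩
      · exact Or.inr ⟨hv, hw, h⟩
      · exact Or.inr ⟨hv, hz, A.trans h h'⟩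

namespace Multigraph

/-- The contraction `K/A` of a multigraph `K` by a partition `A` of a subset `U` of
its vertices: all vertices in a common block of `A` are identified. -/
noncomputable def contract (K : Multigraph) {U : Set K.V} (A : Setoid U) : Multigraph where
  V := Quotient (extendSetoid U A)
  E := K.E
  finV := Fintype.ofFinite _
  finE := K.finE
  ends e := (K.ends e).map (Quotient.mk (extendSetoid U A))

/-- `P(S)`: the partition of `U` in which two vertices lie in the same block iff they
lie in the same connected component of the spanning subgraph `(V(K), S)`. -/
def part (K : Multigraph) (U : Set K.V) (S : Finset K.E) : Setoid U :=
  Setoid.comap Subtype.val (Relation.EqvGen.setoid (K.rel S))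

/-- The auxiliary Negami polynomial `f_A(K;t,x,y)`. -/
noncomputable def negamiAux (K : Multigraph) (U : Set K.V) (A : Setoid U) (t x y : ℝ) : ℝ :=
  ∑ S : Finset K.E,
    if K.part U S = A then
      t ^ (K.omega S - Nat.card (Quotient A)) * x ^ S.card *
        y ^ (Fintype.card K.E - S.card)
    else 0

/-- The auxiliary Tutte polynomial `T_A(K;x,y)`. -/
noncomputable def tutteAux (K : Multigraph) (U : Set K.V) (A : Setoid U) (x y : ℝ) : ℝ :=
  ∑ S : Finset K.E,
    if K.part U S = A then
      (x - 1) ^ (K.omega S - Nat.card (Quotient A)) *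
        (y - 1) ^ (K.omega S + S.card - Fintype.card K.V)
    else 0

end Multigraph

/-- The set of partitions of a finite type is finite. -/
instance setoidFinite {α : Type} [Finite α] : Finite (Setoid α) :=
  Finite.of_injective (fun s : Setoid α => s.r) fun a b h => by
    cases a; cases b; simp only at h; subst h; rfl

noncomputable instance setoidFintype {α : Type} [Finite α] : Fintype (Setoid α) :=
  Fintype.ofFinite _

/-- The number of blocks `|A|` of a partition (setoid) `A`. -/
noncomputable def nblocks {α : Type} (A : Setoid α) : ℕ :=
  Nat.card (Quotient A)

/-- The matrix `T_n(t)` indexed by partitions of `α`, with `(A,B)`-entry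
`t^{|A∧B|}` where `A∧B` is the finest common coarsening (the join `A ⊔ B`). -/
noncomputable def Tmat (α : Type) [Finite α] (t : ℝ) :
    Matrix (Setoid α) (Setoid α) ℝ :=
  Matrix.of fun A B => t ^ nblocks (A ⊔ B)

/-- The matrix `L_n(x)` indexed by partitions of `α`, with `(A,B)`-entry
`(x-1)^{|A∧B|-1}` if `|A∧B| + n = |A| + |B|` and `0` otherwise. -/
noncomputable def Lmat (α : Type) [Finite α] (n : ℕ) (x : ℝ) :
    Matrix (Setoid α) (Setoid α) ℝ :=
  Matrix.of fun A B =>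
    if nblocks (A ⊔ B) + n = nblocks A + nblocks B then
      (x - 1) ^ (nblocks (A ⊔ B) - 1)
    else 0

/-- The connectivity matrix `A_n` indexed by partitions of `α`, with `(A,B)`-entry
`1` if `|A∧B| = 1` and `0` otherwise. -/
noncomputable def Amat (α : Type) [Finite α] :
    Matrix (Setoid α) (Setoid α) ℝ :=
  Matrix.of fun A B => if nblocks (A ⊔ B) = 1 then (1 : ℝ) else 0

/-- `G` is an `n`-sum of `K` and `H` along `U`: `V(G) = V(K) ∪ V(H)`,
`V(K) ∩ V(H) = U`, and `E(G)` is the disjoint union of `E(K)` and `E(H)` with the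
inherited endpoint maps. -/
structure NSum (G K H : Multigraph) (U : Set G.V) where
  ιK : K.V → G.V
  ιH : H.V → G.V
  injK : Function.Injective ιK
  injH : Function.Injective ιH
  cover : Set.range ιK ∪ Set.range ιH = Set.univ
  inter : Set.range ιK ∩ Set.range ιH = U
  edgeEquiv : G.E ≃ K.E ⊕ H.E
  endsK : ∀ a, G.ends (edgeEquiv.symm (Sum.inl a)) = (K.ends a).map ιK
  endsH : ∀ a, G.ends (edgeEquiv.symm (Sum.inr a)) = (H.ends a).map ιH

namespace NSum

variable {G K H : Multigraph} {U : Set G.V}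

/-- The copy of a partition `A` of `U` on the corresponding subset of `V(K)`. -/
def pullK (σ : NSum G K H U) (A : Setoid U) : Setoid (σ.ιK ⁻¹' U : Set K.V) :=
  Setoid.comap (fun v => ⟨σ.ιK v.1, v.2⟩) A

/-- The copy of a partition `A` of `U` on the corresponding subset of `V(H)`. -/
def pullH (σ : NSum G K H U) (A : Setoid U) : Setoid (σ.ιH ⁻¹' U : Set H.V) :=
  Setoid.comap (fun v => ⟨σ.ιH v.1, v.2⟩) A

/-- The contraction `K/A` for a partition `A` of the common vertex set `U`. -/
noncomputable def contractK (σ : NSum G K H U) (A : Setoid U) : Multigraph :=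
  K.contract (σ.pullK A)

/-- The contraction `H/B` for a partition `B` of the common vertex set `U`. -/
noncomputable def contractH (σ : NSum G K H U) (B : Setoid U) : Multigraph :=
  H.contract (σ.pullH B)

end NSum



/-! ### Auxiliary development for the n-sum expansion -/

open Relation

lemma setoid_rel_congr {α : Type} (s : Setoid α) {a a' b b' : α} (ha : a = a') (hb : b = b') :
    s.r a b ↔ s.r a' b' := by subst ha; subst hb; exact Iff.rfl

lemma sym2_exists {α : Type*} (s : Sym2 α) : ∃ p q, s = s(p, q) := by
  induction s using Sym2.ind with
  | _ x y => exact ⟨x, y, rfl⟩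

lemma card_quot_comap {α β : Type} {f : α → β} (hf : Function.Bijective f) (r : Setoid β) :
    Nat.card (Quotient (Setoid.comap f r)) = Nat.card (Quotient r) := by
  apply Nat.card_congr
  refine Equiv.ofBijective (Quotient.lift (fun a => Quotient.mk r (f a))
    (fun a b h => Quotient.sound h)) ⟨?_, ?_⟩
  · intro c d h
    obtain ⟨a, rfl⟩ := Quotient.exists_rep c
    obtain ⟨b, rfl⟩ := Quotient.exists_rep d
    have h' : (Quotient.mk r (f a)) = Quotient.mk r (f b) := h
    have h'' : r.r (f a) (f b) := Quotient.exact h'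
    exact Quotient.sound h''
  · intro c
    obtain ⟨b, rfl⟩ := Quotient.exists_rep c
    obtain ⟨a, rfl⟩ := hf.2 b
    exact ⟨Quotient.mk _ a, rfl⟩

namespace NSum

variable {G K H : Multigraph} {U : Set G.V} (sg : NSum G K H U)

/-! #### Splitting edge sets -/

noncomputable def embK : K.E ↪ G.E :=
  ⟨fun a => sg.edgeEquiv.symm (Sum.inl a), fun a b h =>
    Sum.inl.inj (sg.edgeEquiv.symm.injective h)⟩

noncomputable def embH : H.E ↪ G.E :=
  ⟨fun a => sg.edgeEquiv.symm (Sum.inr a), fun a b h =>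
    Sum.inr.inj (sg.edgeEquiv.symm.injective h)⟩

noncomputable def comb (P : Finset K.E) (Q : Finset H.E) : Finset G.E :=
  P.map sg.embK ∪ Q.map sg.embH

lemma mem_comb_inl (P : Finset K.E) (Q : Finset H.E) (a : K.E) :
    sg.edgeEquiv.symm (Sum.inl a) ∈ sg.comb P Q ↔ a ∈ P := by
  simp only [comb, Finset.mem_union, Finset.mem_map, embK, embH,
    Function.Embedding.coeFn_mk, EmbeddingLike.apply_eq_iff_eq]
  constructor
  · rintro (⟨b, hb, he⟩ | ⟨b, hb, he⟩)
    · have h2 := Sum.inl.inj (sg.edgeEquiv.symm.injective he); subst h2; exact hb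
    · exact absurd (sg.edgeEquiv.symm.injective he) (by simp)
  · intro ha; exact Or.inl ⟨a, ha, rfl⟩

lemma mem_comb_inr (P : Finset K.E) (Q : Finset H.E) (a : H.E) :
    sg.edgeEquiv.symm (Sum.inr a) ∈ sg.comb P Q ↔ a ∈ Q := by
  simp only [comb, Finset.mem_union, Finset.mem_map, embK, embH,
    Function.Embedding.coeFn_mk, EmbeddingLike.apply_eq_iff_eq]
  constructor
  · rintro (⟨b, hb, he⟩ | ⟨b, hb, he⟩)
    · exact absurd (sg.edgeEquiv.symm.injective he) (by simp)
    · have h2 := Sum.inr.inj (sg.edgeEquiv.symm.injective he); subst h2; exact hb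
  · intro ha; exact Or.inr ⟨a, ha, rfl⟩

lemma card_comb (P : Finset K.E) (Q : Finset H.E) :
    (sg.comb P Q).card = P.card + Q.card := by
  rw [comb, Finset.card_union_of_disjoint, Finset.card_map, Finset.card_map]
  simp only [Finset.disjoint_left, Finset.mem_map]
  rintro e ⟨a, _, rfl⟩ ⟨b, _, he⟩
  have : (Sum.inr b : K.E ⊕ H.E) = Sum.inl a := sg.edgeEquiv.symm.injective he
  simp at this

noncomputable def splitE : Finset K.E × Finset H.E ≃ Finset G.E where
  toFun PQ := sg.comb PQ.1 PQ.2
  invFun S := (Finset.univ.filter fun a => sg.edgeEquiv.symm (Sum.inl a) ∈ S,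
               Finset.univ.filter fun a => sg.edgeEquiv.symm (Sum.inr a) ∈ S)
  left_inv := by
    rintro ⟨P, Q⟩
    refine Prod.ext ?_ ?_
    · ext a; simp [sg.mem_comb_inl P Q a]
    · ext a; simp [sg.mem_comb_inr P Q a]
  right_inv S := by
    ext e
    obtain ⟨c, rfl⟩ : ∃ c, sg.edgeEquiv.symm c = e :=
      ⟨sg.edgeEquiv e, sg.edgeEquiv.symm_apply_apply e⟩
    cases c with
    | inl a => simp [sg.mem_comb_inl]
    | inr a => simp [sg.mem_comb_inr]

include sg in
lemma cardE : Fintype.card G.E = Fintype.card K.E + Fintype.card H.E := by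
  rw [Fintype.card_congr sg.edgeEquiv, Fintype.card_sum]

/-! #### Preimages of `U` -/

lemma U_sub_rangeK : U ⊆ Set.range sg.ιK := by
  intro u hu
  have hu' : u ∈ Set.range sg.ιK ∩ Set.range sg.ιH := by rw [sg.inter]; exact hu
  exact hu'.1

lemma U_sub_rangeH : U ⊆ Set.range sg.ιH := by
  intro u hu
  have hu' : u ∈ Set.range sg.ιK ∩ Set.range sg.ιH := by rw [sg.inter]; exact hu
  exact hu'.2

noncomputable def kpre (u : U) : K.V := (sg.U_sub_rangeK u.2).choose

lemma kpre_spec (u : U) : sg.ιK (sg.kpre u) = u := (sg.U_sub_rangeK u.2).choose_spec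

lemma kpre_memUK (u : U) : sg.kpre u ∈ sg.ιK ⁻¹' U := by
  have : sg.ιK (sg.kpre u) ∈ U := by rw [sg.kpre_spec u]; exact u.2
  exact this

lemma kpre_eq {p : K.V} (hp : p ∈ sg.ιK ⁻¹' U) : sg.kpre ⟨sg.ιK p, hp⟩ = p :=
  sg.injK (sg.kpre_spec ⟨sg.ιK p, hp⟩)

noncomputable def hpre (u : U) : H.V := (sg.U_sub_rangeH u.2).choose

lemma hpre_spec (u : U) : sg.ιH (sg.hpre u) = u := (sg.U_sub_rangeH u.2).choose_spec

lemma hpre_memUH (u : U) : sg.hpre u ∈ sg.ιH ⁻¹' U := by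
  have : sg.ιH (sg.hpre u) ∈ U := by rw [sg.hpre_spec u]; exact u.2
  exact this

lemma mem_UK_of_memH {p : K.V} (h : sg.ιK p ∈ Set.range sg.ιH) : p ∈ sg.ιK ⁻¹' U := by
  have h1 : sg.ιK p ∈ Set.range sg.ιK ∩ Set.range sg.ιH := ⟨⟨p, rfl⟩, h⟩
  rw [sg.inter] at h1
  exact h1

lemma memH_of_mem_UK {p : K.V} (h : p ∈ sg.ιK ⁻¹' U) : sg.ιK p ∈ Set.range sg.ιH :=
  sg.U_sub_rangeH h

lemma memK_of_not_memH (v : G.V) (h : v ∉ Set.range sg.ιH) : v ∈ Set.range sg.ιK := by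
  have hv : v ∈ Set.range sg.ιK ∪ Set.range sg.ιH := by rw [sg.cover]; trivial
  rcases hv with h' | h'
  · exact h'
  · exact absurd h' h

/-! #### Partitions of `U` versus partitions of `ιK ⁻¹' U` -/

noncomputable def pushK (R : Setoid (sg.ιK ⁻¹' U : Set K.V)) : Setoid U :=
  Setoid.comap (fun u : U => (⟨sg.kpre u, sg.kpre_memUK u⟩ : (sg.ιK ⁻¹' U : Set K.V))) R

lemma pullK_pushK (R : Setoid (sg.ιK ⁻¹' U : Set K.V)) : sg.pullK (sg.pushK R) = R := by
  apply Setoid.ext; intro a b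
  have h0 : (sg.pullK (sg.pushK R)).r a b ↔
      R.r ⟨sg.kpre ⟨sg.ιK a.1, a.2⟩, sg.kpre_memUK ⟨sg.ιK a.1, a.2⟩⟩
        ⟨sg.kpre ⟨sg.ιK b.1, b.2⟩, sg.kpre_memUK ⟨sg.ιK b.1, b.2⟩⟩ := Iff.rfl
  exact h0.trans (setoid_rel_congr R (Subtype.ext (sg.kpre_eq a.2)) (Subtype.ext (sg.kpre_eq b.2)))

lemma pushK_pullK (A : Setoid U) : sg.pushK (sg.pullK A) = A := by
  apply Setoid.ext; intro u v
  have h0 : (sg.pushK (sg.pullK A)).r u v ↔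
      A.r ⟨sg.ιK (sg.kpre u), sg.kpre_memUK u⟩ ⟨sg.ιK (sg.kpre v), sg.kpre_memUK v⟩ := Iff.rfl
  exact h0.trans (setoid_rel_congr A (Subtype.ext (sg.kpre_spec u)) (Subtype.ext (sg.kpre_spec v)))

lemma pullK_injective : Function.Injective (sg.pullK : Setoid U → _) :=
  Function.LeftInverse.injective sg.pushK_pullK

lemma part_eq_iff (P : Finset K.E) (B : Setoid U) :
    K.part (sg.ιK ⁻¹' U) P = sg.pullK B ↔ B = sg.pushK (K.part (sg.ιK ⁻¹' U) P) := by
  constructor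
  · intro h
    apply sg.pullK_injective
    rw [← h, sg.pullK_pushK]
  · rintro rfl
    rw [sg.pullK_pushK]

lemma card_quot_pullK (A : Setoid U) :
    Nat.card (Quotient (sg.pullK A)) = Nat.card (Quotient A) := by
  refine card_quot_comap ⟨?_, ?_⟩ A
  · intro a b h
    exact Subtype.ext (sg.injK (congrArg Subtype.val h))
  · intro u
    exact ⟨⟨sg.kpre u, sg.kpre_memUK u⟩, Subtype.ext (sg.kpre_spec u)⟩

/-! #### Transfer between `A` and connectivity in `K` -/

lemma relK_iff_A (A : Setoid U) (P : Finset K.E)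
    (hP : K.part (sg.ιK ⁻¹' U) P = sg.pullK A) {p q : K.V}
    (hp : p ∈ sg.ιK ⁻¹' U) (hq : q ∈ sg.ιK ⁻¹' U) :
    EqvGen (K.rel P) p q ↔ A.r ⟨sg.ιK p, hp⟩ ⟨sg.ιK q, hq⟩ := by
  constructor
  · intro h
    have h' : (K.part (sg.ιK ⁻¹' U) P).r ⟨p, hp⟩ ⟨q, hq⟩ := h
    rw [hP] at h'
    exact h'
  · intro h
    have h' : (sg.pullK A).r ⟨p, hp⟩ ⟨q, hq⟩ := h
    rw [← hP] at h'
    exact h'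

lemma A_iff_relK_kpre (A : Setoid U) (P : Finset K.E)
    (hP : K.part (sg.ιK ⁻¹' U) P = sg.pullK A) (u v : U) :
    A.r u v ↔ EqvGen (K.rel P) (sg.kpre u) (sg.kpre v) := by
  refine Iff.symm ((sg.relK_iff_A A P hP (sg.kpre_memUK u) (sg.kpre_memUK v)).trans ?_)
  exact setoid_rel_congr A (Subtype.ext (sg.kpre_spec u)) (Subtype.ext (sg.kpre_spec v))

/-! #### Vertices and classes in `H/A` -/

noncomputable def mkCH (A : Setoid U) (v : H.V) : (sg.contractH A).V :=
  Quotient.mk (extendSetoid (sg.ιH ⁻¹' U) (sg.pullH A)) v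

noncomputable def classH (A : Setoid U) (Q : Finset H.E) (v : H.V) :
    Quotient (EqvGen.setoid ((sg.contractH A).rel Q)) :=
  Quotient.mk _ (sg.mkCH A v)

lemma hpre_eq {v : H.V} (hv : v ∈ sg.ιH ⁻¹' U) : sg.hpre ⟨sg.ιH v, hv⟩ = v :=
  sg.injH (sg.hpre_spec ⟨sg.ιH v, hv⟩)

lemma classH_congr (A : Setoid U) (Q : Finset H.E) {u u' : U} (h : A.r u u') :
    sg.classH A Q (sg.hpre u) = sg.classH A Q (sg.hpre u') := by
  unfold classH
  congr 1
  apply Quotient.sound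
  refine Or.inr ⟨sg.hpre_memUH u, sg.hpre_memUH u', ?_⟩
  show A.r ⟨sg.ιH (sg.hpre u), sg.hpre_memUH u⟩ ⟨sg.ιH (sg.hpre u'), sg.hpre_memUH u'⟩
  exact (setoid_rel_congr A (Subtype.ext (sg.hpre_spec u)) (Subtype.ext (sg.hpre_spec u'))).mpr h

lemma classH_adj (A : Setoid U) (Q : Finset H.E) {a : H.E} (ha : a ∈ Q) {p q : H.V}
    (hpq : H.ends a = s(p, q)) :
    sg.classH A Q p = sg.classH A Q q := by
  apply Quotient.sound
  apply EqvGen.rel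
  refine ⟨a, ha, ?_⟩
  show Sym2.map _ (H.ends a) = _
  rw [hpq, Sym2.map_pair_eq]
  rfl

/-! #### Mapping connectivity into `G` -/

lemma relG_of_relK (P : Finset K.E) (Q : Finset H.E) {p q : K.V}
    (h : EqvGen (K.rel P) p q) :
    EqvGen (G.rel (sg.comb P Q)) (sg.ιK p) (sg.ιK q) := by
  induction h with
  | rel p q hr =>
    obtain ⟨a, ha, he⟩ := hr
    refine EqvGen.rel _ _ ⟨sg.edgeEquiv.symm (Sum.inl a), (sg.mem_comb_inl P Q a).2 ha, ?_⟩
    rw [sg.endsK, he, Sym2.map_pair_eq]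
  | refl p => exact EqvGen.refl _
  | symm p q _ ih => exact EqvGen.symm _ _ ih
  | trans p q r _ _ ih1 ih2 => exact EqvGen.trans _ _ _ ih1 ih2

lemma relG_of_extend (A : Setoid U) (P : Finset K.E) (Q : Finset H.E)
    (hP : K.part (sg.ιK ⁻¹' U) P = sg.pullK A) {v w : H.V}
    (h : (extendSetoid (sg.ιH ⁻¹' U) (sg.pullH A)).r v w) :
    EqvGen (G.rel (sg.comb P Q)) (sg.ιH v) (sg.ιH w) := by
  rcases h with rfl | ⟨hv, hw, hr⟩
  · exact EqvGen.refl _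
  · have hA : A.r ⟨sg.ιH v, hv⟩ ⟨sg.ιH w, hw⟩ := hr
    have hk := (sg.A_iff_relK_kpre A P hP _ _).mp hA
    have h2 := sg.relG_of_relK P Q (q := sg.kpre ⟨sg.ιH w, hw⟩) hk
    rw [sg.kpre_spec, sg.kpre_spec] at h2
    exact h2

noncomputable def jKq (P : Finset K.E) (Q : Finset H.E) :
    Quotient (EqvGen.setoid (K.rel P)) → Quotient (EqvGen.setoid (G.rel (sg.comb P Q))) :=
  Quotient.lift (fun p => Quotient.mk _ (sg.ιK p))
    (fun p q h => Quotient.sound (sg.relG_of_relK P Q h))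

noncomputable def jH0 (A : Setoid U) (P : Finset K.E) (Q : Finset H.E)
    (hP : K.part (sg.ιK ⁻¹' U) P = sg.pullK A) :
    (sg.contractH A).V → Quotient (EqvGen.setoid (G.rel (sg.comb P Q))) :=
  Quotient.lift (fun v : H.V => Quotient.mk _ (sg.ιH v))
    (fun v w h => Quotient.sound (sg.relG_of_extend A P Q hP h))

lemma jH0_wd (A : Setoid U) (P : Finset K.E) (Q : Finset H.E)
    (hP : K.part (sg.ιK ⁻¹' U) P = sg.pullK A) {c d : (sg.contractH A).V}
    (h : EqvGen ((sg.contractH A).rel Q) c d) :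
    sg.jH0 A P Q hP c = sg.jH0 A P Q hP d := by
  induction h with
  | rel c d hr =>
    obtain ⟨a, ha, he⟩ := hr
    obtain ⟨p, q, hpq⟩ := sym2_exists (H.ends a)
    have he' : s(sg.mkCH A p, sg.mkCH A q) = s(c, d) := by
      rw [← he]
      show _ = Sym2.map (sg.mkCH A) (H.ends a)
      rw [hpq, Sym2.map_pair_eq]
    have hGedge : EqvGen (G.rel (sg.comb P Q)) (sg.ιH p) (sg.ιH q) := by
      refine EqvGen.rel _ _ ⟨sg.edgeEquiv.symm (Sum.inr a), (sg.mem_comb_inr P Q a).2 ha, ?_⟩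
      exact (sg.endsH a).trans (by rw [hpq, Sym2.map_pair_eq])
    rcases Sym2.eq_iff.1 he' with ⟨hc, hd⟩ | ⟨hc, hd⟩
    · rw [← hc, ← hd]
      exact Quotient.sound hGedge
    · rw [← hc, ← hd]
      exact Quotient.sound (EqvGen.symm _ _ hGedge)
  | refl c => rfl
  | symm c d _ ih => exact ih.symm
  | trans c d e _ _ ih1 ih2 => exact ih1.trans ih2

noncomputable def jH (A : Setoid U) (P : Finset K.E) (Q : Finset H.E)
    (hP : K.part (sg.ιK ⁻¹' U) P = sg.pullK A) :
    Quotient (EqvGen.setoid ((sg.contractH A).rel Q)) →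
      Quotient (EqvGen.setoid (G.rel (sg.comb P Q))) :=
  Quotient.lift (sg.jH0 A P Q hP) (fun _ _ h => sg.jH0_wd A P Q hP h)

/-! #### The classifying map `Φ` -/

noncomputable def PhiAux (A : Setoid U) (Q : Finset H.E) (P : Finset K.E) (w : K.V) :
    Quotient (EqvGen.setoid ((sg.contractH A).rel Q)) ⊕ Quotient (EqvGen.setoid (K.rel P)) :=
  if h2 : ∃ u : U, EqvGen (K.rel P) w (sg.kpre u) then
    Sum.inl (sg.classH A Q (sg.hpre h2.choose))
  else Sum.inr (Quotient.mk _ w)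

noncomputable def Phi (A : Setoid U) (P : Finset K.E) (Q : Finset H.E) (v : G.V) :
    Quotient (EqvGen.setoid ((sg.contractH A).rel Q)) ⊕ Quotient (EqvGen.setoid (K.rel P)) :=
  if h : v ∈ Set.range sg.ιH then Sum.inl (sg.classH A Q h.choose)
  else sg.PhiAux A Q P (sg.memK_of_not_memH v h).choose

lemma Phi_iotaH (A : Setoid U) (P : Finset K.E) (Q : Finset H.E) (v : H.V) :
    sg.Phi A P Q (sg.ιH v) = Sum.inl (sg.classH A Q v) := by
  have h : sg.ιH v ∈ Set.range sg.ιH := ⟨v, rfl⟩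
  have hc : ∀ h' : sg.ιH v ∈ Set.range sg.ιH, h'.choose = v := fun h' => sg.injH h'.choose_spec
  simp only [Phi, dif_pos h, hc]

lemma Phi_iotaK_notmem (A : Setoid U) (P : Finset K.E) (Q : Finset H.E) (p : K.V)
    (hni : sg.ιK p ∉ Set.range sg.ιH) :
    sg.Phi A P Q (sg.ιK p) = sg.PhiAux A Q P p := by
  have hc : ∀ h' : sg.ιK p ∈ Set.range sg.ιK, h'.choose = p := fun h' => sg.injK h'.choose_spec
  simp only [Phi, dif_neg hni, hc]

lemma Phi_iotaK_mem (A : Setoid U) (P : Finset K.E) (Q : Finset H.E) {p : K.V}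
    (hp : p ∈ sg.ιK ⁻¹' U) :
    sg.Phi A P Q (sg.ιK p) = Sum.inl (sg.classH A Q (sg.hpre ⟨sg.ιK p, hp⟩)) := by
  have h : sg.ιK p ∈ Set.range sg.ιH := sg.memH_of_mem_UK hp
  simp only [Phi, dif_pos h]
  have : h.choose = sg.hpre ⟨sg.ιK p, hp⟩ :=
    sg.injH (h.choose_spec.trans (sg.hpre_spec ⟨sg.ιK p, hp⟩).symm)
  rw [this]

lemma PhiAux_mem (A : Setoid U) (P : Finset K.E) (Q : Finset H.E)
    (hP : K.part (sg.ιK ⁻¹' U) P = sg.pullK A) {p : K.V} (hp : p ∈ sg.ιK ⁻¹' U) :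
    sg.PhiAux A Q P p = Sum.inl (sg.classH A Q (sg.hpre ⟨sg.ιK p, hp⟩)) := by
  have h2 : ∃ u : U, EqvGen (K.rel P) p (sg.kpre u) :=
    ⟨⟨sg.ιK p, hp⟩, by rw [sg.kpre_eq hp]; exact EqvGen.refl p⟩
  simp only [PhiAux, dif_pos h2]
  refine congrArg _ (sg.classH_congr A Q ?_)
  refine (sg.A_iff_relK_kpre A P hP _ _).mpr ?_
  have hs := h2.choose_spec
  rw [sg.kpre_eq hp]
  exact EqvGen.symm _ _ hs

lemma PhiAux_congr (A : Setoid U) (P : Finset K.E) (Q : Finset H.E)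
    (hP : K.part (sg.ιK ⁻¹' U) P = sg.pullK A) {p q : K.V}
    (h : EqvGen (K.rel P) p q) :
    sg.PhiAux A Q P p = sg.PhiAux A Q P q := by
  by_cases h2 : ∃ u : U, EqvGen (K.rel P) p (sg.kpre u)
  · obtain ⟨u, hu⟩ := h2
    have h2p : ∃ u : U, EqvGen (K.rel P) p (sg.kpre u) := ⟨u, hu⟩
    have h2q : ∃ u : U, EqvGen (K.rel P) q (sg.kpre u) :=
      ⟨u, EqvGen.trans _ _ _ (EqvGen.symm _ _ h) hu⟩
    simp only [PhiAux, dif_pos h2p, dif_pos h2q]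
    refine congrArg _ (sg.classH_congr A Q ?_)
    refine (sg.A_iff_relK_kpre A P hP _ _).mpr ?_
    exact EqvGen.trans _ _ _ (EqvGen.symm _ _ h2p.choose_spec)
      (EqvGen.trans _ _ _ h h2q.choose_spec)
  · have h2q : ¬ ∃ u : U, EqvGen (K.rel P) q (sg.kpre u) := by
      rintro ⟨u, hu⟩
      exact h2 ⟨u, EqvGen.trans _ _ _ h hu⟩
    simp only [PhiAux, dif_neg h2, dif_neg h2q]
    exact congrArg _ (Quotient.sound h)

lemma Phi_iotaK_eq (A : Setoid U) (P : Finset K.E) (Q : Finset H.E)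
    (hP : K.part (sg.ιK ⁻¹' U) P = sg.pullK A) (p : K.V) :
    sg.Phi A P Q (sg.ιK p) = sg.PhiAux A Q P p := by
  by_cases hp : p ∈ sg.ιK ⁻¹' U
  · rw [sg.Phi_iotaK_mem A P Q hp, sg.PhiAux_mem A P Q hP hp]
  · exact sg.Phi_iotaK_notmem A P Q p (fun hh => hp (sg.mem_UK_of_memH hh))

lemma Phi_rel (A : Setoid U) (P : Finset K.E) (Q : Finset H.E)
    (hP : K.part (sg.ιK ⁻¹' U) P = sg.pullK A) {v w : G.V}
    (h : G.rel (sg.comb P Q) v w) :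
    sg.Phi A P Q v = sg.Phi A P Q w := by
  obtain ⟨e, he, hew⟩ := h
  obtain ⟨c, rfl⟩ : ∃ c, sg.edgeEquiv.symm c = e :=
    ⟨sg.edgeEquiv e, sg.edgeEquiv.symm_apply_apply e⟩
  cases c with
  | inl a =>
    have ha : a ∈ P := (sg.mem_comb_inl P Q a).1 he
    obtain ⟨p, q, hpq⟩ := sym2_exists (K.ends a)
    rw [sg.endsK, hpq, Sym2.map_pair_eq] at hew
    have hrel : EqvGen (K.rel P) p q := EqvGen.rel _ _ ⟨a, ha, hpq⟩
    have key : ∀ p' q' : K.V, EqvGen (K.rel P) p' q' →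
        sg.Phi A P Q (sg.ιK p') = sg.Phi A P Q (sg.ιK q') := by
      intro p' q' hr
      rw [sg.Phi_iotaK_eq A P Q hP, sg.Phi_iotaK_eq A P Q hP,
        sg.PhiAux_congr A P Q hP hr]
    rcases Sym2.eq_iff.1 hew with ⟨hv, hw⟩ | ⟨hv, hw⟩
    · rw [← hv, ← hw]; exact key p q hrel
    · rw [← hv, ← hw]; exact key q p (EqvGen.symm _ _ hrel)
  | inr a =>
    have ha : a ∈ Q := (sg.mem_comb_inr P Q a).1 he
    obtain ⟨p, q, hpq⟩ := sym2_exists (H.ends a)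
    rw [sg.endsH, hpq, Sym2.map_pair_eq] at hew
    have hcl : sg.classH A Q p = sg.classH A Q q := sg.classH_adj A Q ha hpq
    rcases Sym2.eq_iff.1 hew with ⟨hv, hw⟩ | ⟨hv, hw⟩
    · rw [← hv, ← hw, sg.Phi_iotaH, sg.Phi_iotaH, hcl]
    · rw [← hv, ← hw, sg.Phi_iotaH, sg.Phi_iotaH, hcl]

lemma Phi_eqvGen (A : Setoid U) (P : Finset K.E) (Q : Finset H.E)
    (hP : K.part (sg.ιK ⁻¹' U) P = sg.pullK A) {v w : G.V}
    (h : EqvGen (G.rel (sg.comb P Q)) v w) :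
    sg.Phi A P Q v = sg.Phi A P Q w := by
  induction h with
  | rel v w hr => exact sg.Phi_rel A P Q hP hr
  | refl v => rfl
  | symm v w _ ih => exact ih.symm
  | trans v w z _ _ ih1 ih2 => exact ih1.trans ih2

noncomputable def PhiQ (A : Setoid U) (P : Finset K.E) (Q : Finset H.E)
    (hP : K.part (sg.ιK ⁻¹' U) P = sg.pullK A) :
    Quotient (EqvGen.setoid (G.rel (sg.comb P Q))) →
      Quotient (EqvGen.setoid ((sg.contractH A).rel Q)) ⊕ Quotient (EqvGen.setoid (K.rel P)) :=
  Quotient.lift (sg.Phi A P Q) (fun _ _ h => sg.Phi_eqvGen A P Q hP h)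

/-! #### The decomposition of components of `G` -/

def Meets (P : Finset K.E) (c : Quotient (EqvGen.setoid (K.rel P))) : Prop :=
  ∃ p, p ∈ sg.ιK ⁻¹' U ∧ Quotient.mk (EqvGen.setoid (K.rel P)) p = c

noncomputable def Psi (A : Setoid U) (P : Finset K.E) (Q : Finset H.E)
    (hP : K.part (sg.ιK ⁻¹' U) P = sg.pullK A) :
    Quotient (EqvGen.setoid ((sg.contractH A).rel Q)) ⊕
        {c : Quotient (EqvGen.setoid (K.rel P)) // ¬ sg.Meets P c} →
      Quotient (EqvGen.setoid (G.rel (sg.comb P Q))) :=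
  Sum.elim (sg.jH A P Q hP) (fun c => sg.jKq P Q c.1)

lemma PhiQ_Psi (A : Setoid U) (P : Finset K.E) (Q : Finset H.E)
    (hP : K.part (sg.ιK ⁻¹' U) P = sg.pullK A)
    (z : Quotient (EqvGen.setoid ((sg.contractH A).rel Q)) ⊕
        {c : Quotient (EqvGen.setoid (K.rel P)) // ¬ sg.Meets P c}) :
    sg.PhiQ A P Q hP (sg.Psi A P Q hP z) =
      Sum.elim Sum.inl (fun c => Sum.inr c.1) z := by
  rcases z with zh | ⟨c, hc⟩
  · obtain ⟨ch, rfl⟩ := Quotient.exists_rep zh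
    obtain ⟨v, rfl⟩ : ∃ v : H.V, sg.mkCH A v = ch := Quotient.exists_rep ch
    show sg.Phi A P Q (sg.ιH v) = Sum.inl (sg.classH A Q v)
    exact sg.Phi_iotaH A P Q v
  · obtain ⟨p, rfl⟩ := Quotient.exists_rep c
    have hp : p ∉ sg.ιK ⁻¹' U := fun hp => hc ⟨p, hp, rfl⟩
    have h2 : ¬ ∃ u : U, EqvGen (K.rel P) p (sg.kpre u) := by
      rintro ⟨u, hu⟩
      exact hc ⟨sg.kpre u, sg.kpre_memUK u, Quotient.sound (EqvGen.symm _ _ hu)⟩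
    show sg.Phi A P Q (sg.ιK p) = Sum.inr (Quotient.mk _ p)
    rw [sg.Phi_iotaK_eq A P Q hP p]
    simp only [PhiAux, dif_neg h2]

lemma Psi_injective (A : Setoid U) (P : Finset K.E) (Q : Finset H.E)
    (hP : K.part (sg.ιK ⁻¹' U) P = sg.pullK A) :
    Function.Injective (sg.Psi A P Q hP) := by
  intro z1 z2 h
  have h' := congrArg (sg.PhiQ A P Q hP) h
  rw [sg.PhiQ_Psi A P Q hP z1, sg.PhiQ_Psi A P Q hP z2] at h'
  rcases z1 with a | a <;> rcases z2 with b | b <;>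
    simp only [Sum.elim_inl, Sum.elim_inr] at h'
  · rw [Sum.inl.inj h']
  · exact absurd h' (by simp)
  · exact absurd h' (by simp)
  · rw [Subtype.ext (Sum.inr.inj h')]

lemma Psi_surjective (A : Setoid U) (P : Finset K.E) (Q : Finset H.E)
    (hP : K.part (sg.ιK ⁻¹' U) P = sg.pullK A) :
    Function.Surjective (sg.Psi A P Q hP) := by
  intro c
  obtain ⟨v, rfl⟩ := Quotient.exists_rep c
  by_cases hH : v ∈ Set.range sg.ιH
  · obtain ⟨w, rfl⟩ := hH
    exact ⟨Sum.inl (Quotient.mk _ (sg.mkCH A w)), rfl⟩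
  · obtain ⟨p, rfl⟩ := sg.memK_of_not_memH v hH
    by_cases hm : ∃ q, q ∈ sg.ιK ⁻¹' U ∧ EqvGen (K.rel P) p q
    · obtain ⟨q, hq, hr⟩ := hm
      have h1 : (Quotient.mk (EqvGen.setoid (G.rel (sg.comb P Q))) (sg.ιK p)) =
          Quotient.mk _ (sg.ιK q) := Quotient.sound (sg.relG_of_relK P Q hr)
      obtain ⟨w, hw⟩ := sg.memH_of_mem_UK hq
      refine ⟨Sum.inl (Quotient.mk _ (sg.mkCH A w)), ?_⟩
      show Quotient.mk _ (sg.ιH w) = _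
      rw [hw, ← h1]
    · refine ⟨Sum.inr ⟨Quotient.mk _ p, ?_⟩, rfl⟩
      rintro ⟨q, hq, hqe⟩
      exact hm ⟨q, hq, EqvGen.symm _ _ (Quotient.exact hqe)⟩

noncomputable def meetsMap (A : Setoid U) (P : Finset K.E)
    (hP : K.part (sg.ιK ⁻¹' U) P = sg.pullK A) :
    Quotient A → {c : Quotient (EqvGen.setoid (K.rel P)) // sg.Meets P c} :=
  Quotient.lift (fun u : U => ⟨Quotient.mk _ (sg.kpre u), ⟨sg.kpre u, sg.kpre_memUK u, rfl⟩⟩)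
    (fun u v h => Subtype.ext (Quotient.sound ((sg.A_iff_relK_kpre A P hP u v).mp h)))

lemma meetsMap_bijective (A : Setoid U) (P : Finset K.E)
    (hP : K.part (sg.ιK ⁻¹' U) P = sg.pullK A) :
    Function.Bijective (sg.meetsMap A P hP) := by
  constructor
  · intro d1 d2 h
    obtain ⟨u, rfl⟩ := Quotient.exists_rep d1
    obtain ⟨v, rfl⟩ := Quotient.exists_rep d2
    have h' : (Quotient.mk (EqvGen.setoid (K.rel P)) (sg.kpre u)) =
        Quotient.mk _ (sg.kpre v) := congrArg Subtype.val h
    exact Quotient.sound ((sg.A_iff_relK_kpre A P hP u v).mpr (Quotient.exact h'))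
  · rintro ⟨c, p, hp, rfl⟩
    refine ⟨Quotient.mk _ (⟨sg.ιK p, hp⟩ : U), Subtype.ext ?_⟩
    show Quotient.mk _ (sg.kpre ⟨sg.ιK p, hp⟩) = _
    rw [sg.kpre_eq hp]

lemma omega_key (A : Setoid U) (P : Finset K.E) (Q : Finset H.E)
    (hP : K.part (sg.ιK ⁻¹' U) P = sg.pullK A) :
    Nat.card (Quotient A) ≤ K.omega P ∧
      G.omega (sg.comb P Q) + Nat.card (Quotient A) =
        K.omega P + (sg.contractH A).omega Q := by
  have e1 : Nat.card (Quotient (EqvGen.setoid ((sg.contractH A).rel Q)) ⊕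
      {c : Quotient (EqvGen.setoid (K.rel P)) // ¬ sg.Meets P c}) =
      Nat.card (Quotient (EqvGen.setoid (G.rel (sg.comb P Q)))) :=
    Nat.card_congr (Equiv.ofBijective _
      ⟨sg.Psi_injective A P Q hP, sg.Psi_surjective A P Q hP⟩)
  rw [Nat.card_sum] at e1
  have e2 : Nat.card (Quotient A) =
      Nat.card {c : Quotient (EqvGen.setoid (K.rel P)) // sg.Meets P c} :=
    Nat.card_congr (Equiv.ofBijective _ (sg.meetsMap_bijective A P hP))
  have e3 : Nat.card {c : Quotient (EqvGen.setoid (K.rel P)) // sg.Meets P c} +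
      Nat.card {c : Quotient (EqvGen.setoid (K.rel P)) // ¬ sg.Meets P c} = K.omega P := by
    rw [Multigraph.omega, ← Nat.card_sum]
    exact Nat.card_congr (Equiv.sumCompl _)
  have hG : G.omega (sg.comb P Q) =
      Nat.card (Quotient (EqvGen.setoid ((sg.contractH A).rel Q))) +
        Nat.card {c : Quotient (EqvGen.setoid (K.rel P)) // ¬ sg.Meets P c} := by
    rw [Multigraph.omega, ← e1]
  have hH' : (sg.contractH A).omega Q =
      Nat.card (Quotient (EqvGen.setoid ((sg.contractH A).rel Q))) := rfl
  omega

end NSum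

/-- `f(G) = Σ_{A ∈ Γ(U)} f_A(K) · f(H/A)` for an `n`-sum. -/
theorem negami_aux_expansion
    (G K H : Multigraph) (U : Set G.V) (n : ℕ) (hn : 1 ≤ n)
    (sg : NSum G K H U) (hU : Nat.card ↥U = n) (t x y : ℝ) :
    G.negami t x y =
      ∑ A : Setoid ↥U,
        K.negamiAux (sg.ιK ⁻¹' U) (sg.pullK A) t x y * (sg.contractH A).negami t x y := by
  classical
  have hR : ∀ A : Setoid ↥U,
      K.negamiAux (sg.ιK ⁻¹' U) (sg.pullK A) t x y * (sg.contractH A).negami t x y =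
      ∑ P : Finset K.E, ∑ Q : Finset H.E,
        if K.part (sg.ιK ⁻¹' U) P = sg.pullK A then
          (t ^ (K.omega P - Nat.card (Quotient A)) * x ^ P.card *
            y ^ (Fintype.card K.E - P.card)) *
          (t ^ (sg.contractH A).omega Q * x ^ Q.card * y ^ (Fintype.card H.E - Q.card))
        else 0 := by
    intro A
    have hnegH : (sg.contractH A).negami t x y
        = ∑ Q : Finset H.E, t ^ (sg.contractH A).omega Q * x ^ Q.card *
            y ^ (Fintype.card H.E - Q.card) := rfl
    rw [Multigraph.negamiAux, Finset.sum_mul]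
    refine Finset.sum_congr rfl fun P _ => ?_
    rw [ite_mul, zero_mul]
    by_cases hc : K.part (sg.ιK ⁻¹' U) P = sg.pullK A
    · rw [if_pos hc, hnegH, Finset.mul_sum, sg.card_quot_pullK A]
      exact Finset.sum_congr rfl fun Q _ => by rw [if_pos hc]
    · rw [if_neg hc]
      simp only [if_neg hc, Finset.sum_const_zero]
  calc G.negami t x y
      = ∑ PQ : Finset K.E × Finset H.E,
          (fun S : Finset G.E =>
            t ^ G.omega S * x ^ S.card * y ^ (Fintype.card G.E - S.card))
            (sg.splitE PQ) := (Equiv.sum_comp sg.splitE _).symm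
    _ = ∑ P : Finset K.E, ∑ Q : Finset H.E,
          t ^ G.omega (sg.comb P Q) * x ^ (sg.comb P Q).card *
            y ^ (Fintype.card G.E - (sg.comb P Q).card) := by
        rw [Fintype.sum_prod_type]
        exact Finset.sum_congr rfl fun P _ => Finset.sum_congr rfl fun Q _ => rfl
    _ = ∑ P : Finset K.E, ∑ Q : Finset H.E, ∑ A : Setoid ↥U,
          (if K.part (sg.ιK ⁻¹' U) P = sg.pullK A then
            (t ^ (K.omega P - Nat.card (Quotient A)) * x ^ P.card *
              y ^ (Fintype.card K.E - P.card)) *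
            (t ^ (sg.contractH A).omega Q * x ^ Q.card *
              y ^ (Fintype.card H.E - Q.card))
          else 0) := by
        refine Finset.sum_congr rfl fun P _ => Finset.sum_congr rfl fun Q _ => ?_
        have hcond : ∀ B : Setoid ↥U,
            (K.part (sg.ιK ⁻¹' U) P = sg.pullK B) ↔
              B = sg.pushK (K.part (sg.ιK ⁻¹' U) P) := fun B => sg.part_eq_iff P B
        rw [Finset.sum_congr rfl fun B _ => if_congr (hcond B) rfl rfl,
          Finset.sum_ite_eq' Finset.univ (sg.pushK (K.part (sg.ιK ⁻¹' U) P)) _,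
          if_pos (Finset.mem_univ _)]
        set A₀ := sg.pushK (K.part (sg.ιK ⁻¹' U) P) with hA₀def
        have hP : K.part (sg.ιK ⁻¹' U) P = sg.pullK A₀ := (sg.part_eq_iff P A₀).mpr rfl
        obtain ⟨hle, heq⟩ := sg.omega_key A₀ P Q hP
        have h3 := sg.card_comb P Q
        have h4 := sg.cardE
        have h5 : P.card ≤ Fintype.card K.E := by simpa using Finset.card_le_univ P
        have h6 : Q.card ≤ Fintype.card H.E := by simpa using Finset.card_le_univ Q
        have e1 : G.omega (sg.comb P Q) =
            (K.omega P - Nat.card (Quotient A₀)) + (sg.contractH A₀).omega Q := by omega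
        have e2 : Fintype.card G.E - (sg.comb P Q).card =
            (Fintype.card K.E - P.card) + (Fintype.card H.E - Q.card) := by omega
        rw [e1, e2, h3, pow_add, pow_add, pow_add]
        ring
    _ = ∑ P : Finset K.E, ∑ A : Setoid ↥U, ∑ Q : Finset H.E,
          (if K.part (sg.ιK ⁻¹' U) P = sg.pullK A then
            (t ^ (K.omega P - Nat.card (Quotient A)) * x ^ P.card *
              y ^ (Fintype.card K.E - P.card)) *
            (t ^ (sg.contractH A).omega Q * x ^ Q.card *
              y ^ (Fintype.card H.E - Q.card))
          else 0) := Finset.sum_congr rfl fun P _ => Finset.sum_comm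
    _ = ∑ A : Setoid ↥U, ∑ P : Finset K.E, ∑ Q : Finset H.E,
          (if K.part (sg.ιK ⁻¹' U) P = sg.pullK A then
            (t ^ (K.omega P - Nat.card (Quotient A)) * x ^ P.card *
              y ^ (Fintype.card K.E - P.card)) *
            (t ^ (sg.contractH A).omega Q * x ^ Q.card *
              y ^ (Fintype.card H.E - Q.card))
          else 0) := Finset.sum_comm
    _ = ∑ A : Setoid ↥U,
          K.negamiAux (sg.ιK ⁻¹' U) (sg.pullK A) t x y * (sg.contractH A).negami t x y :=
        Finset.sum_congr rfl fun A _ => (hR A).symm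
end

section
/- Let K be a multigraph with a distinguished n-element subset U of its vertices (n ≥ 1), let A ∈ Γ(U), and let t, x, y be real numbers. Then f(K/A;t,x,y) = Σ_{B ∈ Γ(U)} t^{|A∧B|} · f_B(K;t,x,y). -/
attribute [local instance] Classical.propDecidable

section NegamiContract

open Relation

private theorem qsound {α : Type*} {s : Setoid α} {a b : α} (h : s a b) :
    Quotient.mk s a = Quotient.mk s b := Quot.sound h

private theorem qexact {α : Type*} {s : Setoid α} {a b : α}
    (h : Quotient.mk s a = Quotient.mk s b) : s a b := Quotient.exact' h

variable (K : Multigraph) (U : Set K.V) (A : Setoid ↥U) (S : Finset K.E)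

/-- The component setoid of `(V(K), S)`. -/
private abbrev Es : Setoid K.V := Relation.EqvGen.setoid (K.rel S)

/-- The join of the block setoid of `A` and the component setoid. -/
private abbrev Rs : Setoid K.V := extendSetoid U A ⊔ Es K S

private def R0 : Setoid K.V where
  r v w := Es K S v w ∨
    ∃ u u' : ↥U, Es K S v ↑u ∧ Es K S w ↑u' ∧ (A ⊔ K.part U S) u u'
  iseqv := by
    constructor
    · exact fun v => Or.inl ((Es K S).refl' v)
    · rintro v w (h | ⟨u, u', h1, h2, h3⟩)
      · exact Or.inl ((Es K S).symm' h)
      · exact Or.inr ⟨u', u, h2, h1, (A ⊔ K.part U S).symm' h3⟩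
    · rintro v w z (h | ⟨u, u', h1, h2, h3⟩) (h' | ⟨p, p', h1', h2', h3'⟩)
      · exact Or.inl ((Es K S).trans' h h')
      · exact Or.inr ⟨p, p', (Es K S).trans' h h1', h2', h3'⟩
      · exact Or.inr ⟨u, u', h1, (Es K S).trans' ((Es K S).symm' h') h2, h3⟩
      · refine Or.inr ⟨u, p', h1, h2', ?_⟩
        have hup : (K.part U S) u' p := (Es K S).trans' ((Es K S).symm' h2) h1'
        exact (A ⊔ K.part U S).trans' h3
          ((A ⊔ K.part U S).trans' (Setoid.le_def.mp le_sup_right hup) h3')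

private lemma rs_eq : Rs K U A S = R0 K U A S := by
  apply le_antisymm
  · apply sup_le
    · intro v w h
      rcases h with rfl | ⟨hv, hw, hA⟩
      · exact Or.inl ((Es K S).refl' v)
      · exact Or.inr ⟨⟨v, hv⟩, ⟨w, hw⟩, (Es K S).refl' v, (Es K S).refl' w,
          Setoid.le_def.mp le_sup_left hA⟩
    · exact fun v w h => Or.inl h
  · intro v w h
    rcases h with h | ⟨u, u', h1, h2, h3⟩
    · exact Setoid.le_def.mp le_sup_right h
    · have hC : (A ⊔ K.part U S : Setoid ↥U) ≤
          Setoid.comap Subtype.val (Rs K U A S) := by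
        apply sup_le
        · intro a b hab
          exact Setoid.le_def.mp le_sup_left
            (Or.inr ⟨a.2, b.2, hab⟩ : extendSetoid U A ↑a ↑b)
        · intro a b hab
          exact Setoid.le_def.mp le_sup_right hab
      have hu : Rs K U A S v ↑u := Setoid.le_def.mp le_sup_right h1
      have hu' : Rs K U A S w ↑u' := Setoid.le_def.mp le_sup_right h2
      exact (Rs K U A S).trans' hu
        ((Rs K U A S).trans' (hC h3) ((Rs K U A S).symm' hu'))

private lemma comap_val_rs :
    Setoid.comap Subtype.val (Rs K U A S) = A ⊔ K.part U S := by
  apply le_antisymm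
  · intro a b hab
    have h : R0 K U A S ↑a ↑b := by rw [← rs_eq]; exact hab
    rcases h with h | ⟨u, u', h1, h2, h3⟩
    · exact Setoid.le_def.mp le_sup_right (h : (K.part U S) a b)
    · have hau : (K.part U S) a u := h1
      have hbu : (K.part U S) b u' := h2
      exact (A ⊔ K.part U S).trans' (Setoid.le_def.mp le_sup_right hau)
        ((A ⊔ K.part U S).trans' h3
          ((A ⊔ K.part U S).symm' (Setoid.le_def.mp le_sup_right hbu)))
  · apply sup_le
    · intro a b hab
      exact Setoid.le_def.mp le_sup_left
        (Or.inr ⟨a.2, b.2, hab⟩ : extendSetoid U A ↑a ↑b)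
    · intro a b hab
      exact Setoid.le_def.mp le_sup_right hab

private lemma meets_iff (v : K.V) :
    (∃ u : ↥U, Es K S ↑u v) ↔ (∃ u : ↥U, Rs K U A S ↑u v) := by
  constructor
  · rintro ⟨u, hu⟩
    exact ⟨u, Setoid.le_def.mp le_sup_right hu⟩
  · rintro ⟨u, hu⟩
    have h : R0 K U A S ↑u v := by rw [← rs_eq]; exact hu
    rcases h with h | ⟨p, p', h1, h2, h3⟩
    · exact ⟨u, h⟩
    · exact ⟨p', (Es K S).symm' h2⟩

private lemma card_quot_rs :
    Nat.card (Quotient (Rs K U A S)) + Nat.card (Quotient (K.part U S)) =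
      Nat.card (Quotient (A ⊔ K.part U S)) + Nat.card (Quotient (Es K S)) ∧
    Nat.card (Quotient (K.part U S)) ≤ Nat.card (Quotient (Es K S)) := by
  classical
  set sE : Set (Quotient (Es K S)) :=
    Set.range (Quotient.mk'' ∘ (Subtype.val : ↥U → K.V)) with hsE
  set sR : Set (Quotient (Rs K U A S)) :=
    Set.range (Quotient.mk'' ∘ (Subtype.val : ↥U → K.V)) with hsR
  have hQB : Nat.card (Quotient (K.part U S)) = Nat.card ↥sE :=
    Nat.card_congr (Setoid.comapQuotientEquiv Subtype.val (Es K S))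
  have hQC : Nat.card (Quotient (A ⊔ K.part U S)) = Nat.card ↥sR := by
    have e := Setoid.comapQuotientEquiv (Subtype.val : ↥U → K.V) (Rs K U A S)
    rw [comap_val_rs] at e
    exact Nat.card_congr e
  have hE : Nat.card (Quotient (Es K S)) = Nat.card ↥sE + Nat.card ↥sEᶜ := by
    rw [← Nat.card_sum]
    exact Nat.card_congr (Equiv.Set.sumCompl sE).symm
  have hR : Nat.card (Quotient (Rs K U A S)) = Nat.card ↥sR + Nat.card ↥sRᶜ := by
    rw [← Nat.card_sum]
    exact Nat.card_congr (Equiv.Set.sumCompl sR).symm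
  have hmem : ∀ v : K.V,
      Quotient.mk (Es K S) v ∈ sE ↔ Quotient.mk (Rs K U A S) v ∈ sR := by
    intro v
    simp only [hsE, hsR, Set.mem_range, Function.comp_apply]
    constructor
    · rintro ⟨u, hu⟩
      have h : Es K S ↑u v := qexact hu
      obtain ⟨u', hu'⟩ := (meets_iff K U A S v).mp ⟨u, h⟩
      exact ⟨u', qsound hu'⟩
    · rintro ⟨u, hu⟩
      have h : Rs K U A S ↑u v := qexact hu
      obtain ⟨u', hu'⟩ := (meets_iff K U A S v).mpr ⟨u, h⟩
      exact ⟨u', qsound hu'⟩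
  have hX : Nat.card ↥sEᶜ = Nat.card ↥sRᶜ := by
    refine Nat.card_congr (Equiv.ofBijective
      (fun c => ⟨Quotient.lift (Quotient.mk (Rs K U A S))
        (fun a b h => qsound (Setoid.le_def.mp le_sup_right h)) c.1, ?_⟩)
      ⟨?_, ?_⟩)
    · obtain ⟨c, hc⟩ := c
      obtain ⟨v, rfl⟩ := Quotient.exists_rep c
      exact fun h => hc ((hmem v).mpr h)
    · rintro ⟨c, hc⟩ ⟨d, hd⟩ h
      obtain ⟨v, rfl⟩ := Quotient.exists_rep c
      obtain ⟨w, rfl⟩ := Quotient.exists_rep d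
      have h' : Rs K U A S v w := qexact (Subtype.mk_eq_mk.mp h)
      have h'' : R0 K U A S v w := by rw [← rs_eq]; exact h'
      rcases h'' with h'' | ⟨u, u', h1, h2, h3⟩
      · exact Subtype.ext (qsound h'')
      · exact absurd ⟨u, qsound ((Es K S).symm' h1)⟩ hc
    · rintro ⟨c, hc⟩
      obtain ⟨v, rfl⟩ := Quotient.exists_rep c
      exact ⟨⟨Quotient.mk _ v, fun h => hc ((hmem v).mp h)⟩, rfl⟩
  constructor
  · omega
  · omega

private lemma omega_contract_card :
    (K.contract A).omega S = Nat.card (Quotient (Rs K U A S)) := by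
  have h1 : Rs K U A S ≤ Setoid.ker (fun v : K.V =>
      Quotient.mk (Relation.EqvGen.setoid ((K.contract A).rel S))
        (Quotient.mk (extendSetoid U A) v)) := by
    apply sup_le
    · intro a b h
      show Quotient.mk _ _ = Quotient.mk _ _
      rw [qsound h]
    · apply Setoid.eqvGen_le
      rintro a b ⟨e, he, hends⟩
      refine qsound (Relation.EqvGen.rel _ _ ⟨e, he, ?_⟩)
      show (K.ends e).map _ = _
      rw [hends, Sym2.map_pair_eq]
      rfl
  let g : (K.contract A).V → Quotient (Rs K U A S) :=
    Quotient.lift (Quotient.mk (Rs K U A S))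
      (fun a b h => qsound (Setoid.le_def.mp le_sup_left h))
  have h2 : Relation.EqvGen.setoid ((K.contract A).rel S) ≤ Setoid.ker g := by
    apply Setoid.eqvGen_le
    rintro q q' ⟨e, he, hends⟩
    have key : ∀ p : Sym2 K.V, K.ends e = p →
        p.map (Quotient.mk (extendSetoid U A)) = s(q, q') → g q = g q' := by
      intro p
      induction p using Sym2.ind with
      | _ a b =>
        intro hab hmap
        rw [Sym2.map_pair_eq] at hmap
        have hrel : Rs K U A S a b :=
          Setoid.le_def.mp le_sup_right (Relation.EqvGen.rel _ _ ⟨e, he, hab⟩)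
        have hg : g (Quotient.mk (extendSetoid U A) a) =
            g (Quotient.mk (extendSetoid U A) b) := qsound hrel
        rcases Sym2.eq_iff.mp hmap with ⟨ha, hb⟩ | ⟨ha, hb⟩
        · rw [← ha, ← hb]; exact hg
        · rw [← ha, ← hb]; exact hg.symm
    exact key (K.ends e) rfl hends
  refine Nat.card_congr (Equiv.symm ?_)
  exact
    { toFun := Quotient.lift _ (fun a b h => h1 h)
      invFun := Quotient.lift g (fun a b h => h2 h)
      left_inv := fun q => Quotient.inductionOn q fun v => rfl
      right_inv := fun q => Quotient.inductionOn q fun q' =>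
        Quotient.inductionOn q' fun v => rfl }

private lemma omega_contract_eq :
    (K.contract A).omega S =
      nblocks (A ⊔ K.part U S) + (K.omega S - nblocks (K.part U S)) ∧
    nblocks (K.part U S) ≤ K.omega S := by
  obtain ⟨h1, h2⟩ := card_quot_rs K U A S
  have h3 := omega_contract_card K U A S
  have h4 : K.omega S = Nat.card (Quotient (Es K S)) := rfl
  have h5 : nblocks (K.part U S) = Nat.card (Quotient (K.part U S)) := rfl
  have h6 : nblocks (A ⊔ K.part U S) = Nat.card (Quotient (A ⊔ K.part U S)) := rfl
  omega

end NegamiContract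


/-- `f(K/A) = Σ_{B ∈ Γ(U)} t^{|A∧B|} · f_B(K)`. -/
theorem negami_contract_expansion
    (K : Multigraph) (U : Set K.V) (n : ℕ) (hn : 1 ≤ n) (hU : Nat.card ↥U = n)
    (A : Setoid ↥U) (t x y : ℝ) :
    (K.contract A).negami t x y =
      ∑ B : Setoid ↥U, t ^ nblocks (A ⊔ B) * K.negamiAux U B t x y := by
  have hstep : ∀ S : Finset K.E,
      (∑ B : Setoid ↥U, t ^ nblocks (A ⊔ B) *
        (if K.part U S = B then
          t ^ (K.omega S - Nat.card (Quotient B)) * x ^ S.card *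
            y ^ (Fintype.card K.E - S.card)
        else 0)) =
      t ^ ((K.contract A).omega S) * x ^ S.card *
        y ^ (Fintype.card K.E - S.card) := by
    intro S
    rw [Finset.sum_eq_single (K.part U S)]
    · rw [if_pos rfl]
      obtain ⟨h1, h2⟩ := omega_contract_eq K U A S
      rw [h1, pow_add,
        show Nat.card (Quotient (K.part U S)) = nblocks (K.part U S) from rfl]
      ring
    · intro b _ hb
      rw [if_neg (fun h => hb h.symm), mul_zero]
    · intro h
      exact absurd (Finset.mem_univ _) h
  calc (K.contract A).negami t x y
      = ∑ S : Finset K.E, t ^ ((K.contract A).omega S) * x ^ S.card *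
          y ^ (Fintype.card K.E - S.card) := rfl
    _ = ∑ S : Finset K.E, ∑ B : Setoid ↥U, t ^ nblocks (A ⊔ B) *
          (if K.part U S = B then
            t ^ (K.omega S - Nat.card (Quotient B)) * x ^ S.card *
              y ^ (Fintype.card K.E - S.card)
          else 0) := (Finset.sum_congr rfl fun S _ => (hstep S).symm)
    _ = ∑ B : Setoid ↥U, ∑ S : Finset K.E, t ^ nblocks (A ⊔ B) *
          (if K.part U S = B then
            t ^ (K.omega S - Nat.card (Quotient B)) * x ^ S.card *
              y ^ (Fintype.card K.E - S.card)
          else 0) := Finset.sum_comm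
    _ = ∑ B : Setoid ↥U, t ^ nblocks (A ⊔ B) * K.negamiAux U B t x y :=
          Finset.sum_congr rfl fun B _ => (Finset.mul_sum _ _ _).symm
end

section
/- Let G be an n-sum of connected multigraphs K and H along an n-element vertex set U (n ≥ 1), and let x be a real number. Then T(G;x,1) = Σ_{A ∈ Γ(U)} T_A(K;x,1) · T(H/A;x,1). -/
attribute [local instance] Classical.propDecidable

section AuxBasic
open Relation

variable {α β : Type*}

lemma sym2_exists_s14 (z : Sym2 α) : ∃ x y, z = s(x, y) :=
  z.ind fun x y => ⟨x, y, rfl⟩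

lemma eqvGen_mono' {r : α → α → Prop} {f : α → β} {g : β → β → Prop}
    (h : ∀ a b, r a b → EqvGen g (f a) (f b)) :
    ∀ a b, EqvGen r a b → EqvGen g (f a) (f b) := by
  intro a b hab
  induction hab with
  | rel a b h' => exact h a b h'
  | refl a => exact EqvGen.refl _
  | symm a b _ ih => exact EqvGen.symm _ _ ih
  | trans a b c _ _ ih1 ih2 => exact EqvGen.trans _ _ _ ih1 ih2

lemma eqvGen_const {r : α → α → Prop} {f : α → β}
    (h : ∀ a b, r a b → f a = f b) :
    ∀ a b, EqvGen r a b → f a = f b := by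
  intro a b hab
  induction hab with
  | rel a b h' => exact h a b h'
  | refl a => rfl
  | symm a b _ ih => exact ih.symm
  | trans a b c _ _ ih1 ih2 => exact ih1.trans ih2

lemma eqvGen_setoid_r {r : α → α → Prop} {a b : α} :
    (EqvGen.setoid r).r a b ↔ EqvGen r a b := Iff.rfl

lemma quot_mk_eq_iff {r : α → α → Prop} {a b : α} :
    (Quotient.mk (EqvGen.setoid r) a = Quotient.mk (EqvGen.setoid r) b) ↔ EqvGen r a b :=
  ⟨Quotient.exact, fun h => Quotient.sound (show (EqvGen.setoid r).r a b from h)⟩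

end AuxBasic
section GraphCount
open Relation

namespace Multigraph

lemma omega_empty (M : Multigraph) : M.omega (∅ : Finset M.E) = Fintype.card M.V := by
  have e : Quotient (EqvGen.setoid (M.rel (∅ : Finset M.E))) ≃ M.V := by
    refine ⟨Quotient.lift id ?_, fun v => Quotient.mk _ v, ?_, ?_⟩
    · intro a b hab
      refine eqvGen_const (f := id) ?_ a b hab
      rintro a b ⟨e, he, -⟩
      exact absurd he (Finset.notMem_empty e)
    · intro q
      obtain ⟨v, rfl⟩ := Quotient.exists_rep q
      rfl
    · intro v; rfl
  rw [omega, Nat.card_congr e, Nat.card_eq_fintype_card]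

lemma omega_le_omega_insert_add_one (M : Multigraph) (S : Finset M.E) (g : M.E) :
    M.omega S ≤ M.omega (insert g S) + 1 := by
  classical
  obtain ⟨a, b, hab⟩ := sym2_exists_s14 (M.ends g)
  set r := M.rel S with hr
  set r' := M.rel (insert g S) with hr'
  have hmono : ∀ v w, r v w → r' v w := by
    rintro v w ⟨e, he, h⟩
    exact ⟨e, Finset.mem_insert_of_mem he, h⟩
  -- key structure of EqvGen r'
  have key : ∀ v w, EqvGen r' v w →
      EqvGen r v w ∨ ((EqvGen r v a ∨ EqvGen r v b) ∧ (EqvGen r w a ∨ EqvGen r w b)) := by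
    intro v w hvw
    induction hvw with
    | rel v w h =>
      obtain ⟨e, he, hends⟩ := h
      rcases Finset.mem_insert.1 he with rfl | he'
      · rw [hab] at hends
        rcases Sym2.eq_iff.1 hends with ⟨rfl, rfl⟩ | ⟨rfl, rfl⟩
        · exact Or.inr ⟨Or.inl (EqvGen.refl _), Or.inr (EqvGen.refl _)⟩
        · exact Or.inr ⟨Or.inr (EqvGen.refl _), Or.inl (EqvGen.refl _)⟩
      · exact Or.inl (EqvGen.rel _ _ ⟨e, he', hends⟩)
    | refl v => exact Or.inl (EqvGen.refl _)
    | symm v w _ ih =>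
      rcases ih with h | ⟨h1, h2⟩
      · exact Or.inl (EqvGen.symm _ _ h)
      · exact Or.inr ⟨h2, h1⟩
    | trans v w z _ _ ih1 ih2 =>
      rcases ih1 with h1 | ⟨h1a, h1b⟩
      · rcases ih2 with h2 | ⟨h2a, h2b⟩
        · exact Or.inl (EqvGen.trans _ _ _ h1 h2)
        · exact Or.inr ⟨Or.imp (fun h => EqvGen.trans _ _ _ h1 h)
            (fun h => EqvGen.trans _ _ _ h1 h) h2a, h2b⟩
      · rcases ih2 with h2 | ⟨h2a, h2b⟩
        · exact Or.inr ⟨h1a, Or.imp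
            (fun h => EqvGen.trans _ _ _ (EqvGen.symm _ _ h2) h)
            (fun h => EqvGen.trans _ _ _ (EqvGen.symm _ _ h2) h) h1b⟩
        · exact Or.inr ⟨h1a, h2b⟩
  set Q := Quotient (EqvGen.setoid r)
  set Q' := Quotient (EqvGen.setoid r')
  have : Finite Q' := Quotient.finite _
  have : Finite Q := Quotient.finite _
  set p : Q → Q' := Quotient.lift (fun v => Quotient.mk (EqvGen.setoid r') v)
    (fun v w h => Quotient.sound
      (show (EqvGen.setoid r').r v w from eqvGen_mono' (f := id)
        (fun v w h => EqvGen.rel _ _ (hmono v w h)) v w h)) with hp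
  have hinj : Function.Injective
      (fun c : {c : Q // c ≠ Quotient.mk (EqvGen.setoid r) a} => p c.1) := by
    rintro ⟨c, hc⟩ ⟨d, hd⟩ h
    obtain ⟨v, rfl⟩ := Quotient.exists_rep c
    obtain ⟨w, rfl⟩ := Quotient.exists_rep d
    simp only [hp] at h
    have hvw : EqvGen r' v w := quot_mk_eq_iff.1 h
    rcases key v w hvw with h | ⟨h1, h2⟩
    · exact Subtype.ext (quot_mk_eq_iff.2 h)
    · rcases h1 with h1 | h1
      · exact absurd (quot_mk_eq_iff.2 h1) hc
      rcases h2 with h2 | h2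
      · exact absurd (quot_mk_eq_iff.2 h2) hd
      · exact Subtype.ext (quot_mk_eq_iff.2 (EqvGen.trans _ _ _ h1 (EqvGen.symm _ _ h2)))
  have hle : Nat.card {c : Q // c ≠ Quotient.mk (EqvGen.setoid r) a} ≤ Nat.card Q' :=
    Nat.card_le_card_of_injective _ hinj
  have hsplit : Nat.card Q ≤ Nat.card {c : Q // c ≠ Quotient.mk (EqvGen.setoid r) a} + 1 := by
    haveI : Fintype Q := Fintype.ofFinite Q
    rw [Nat.card_eq_fintype_card, Nat.card_eq_fintype_card]
    have := Fintype.card_subtype_compl (fun c : Q => c = Quotient.mk (EqvGen.setoid r) a)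
    rw [Fintype.card_subtype_eq] at this
    rw [this]
    omega
  calc M.omega S = Nat.card Q := rfl
    _ ≤ _ + 1 := hsplit
    _ ≤ Nat.card Q' + 1 := by omega
    _ = M.omega (insert g S) + 1 := rfl

lemma card_le_omega_add_card (M : Multigraph) (S : Finset M.E) :
    Fintype.card M.V ≤ M.omega S + S.card := by
  classical
  induction S using Finset.induction_on with
  | empty => rw [omega_empty]; simp
  | insert g S hg ih =>
    have h1 := omega_le_omega_insert_add_one M S g
    rw [Finset.card_insert_of_notMem hg]
    omega

end Multigraph
end GraphCount
section SetoidCount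
open Relation

variable {α β : Type}

/-- Quotient by comap along a bijection has the same cardinality. -/
noncomputable def comapQuotientEquivOfBijective (f : α → β) (hf : Function.Bijective f)
    (r : Setoid β) : Quotient (Setoid.comap f r) ≃ Quotient r := by
  refine (Setoid.comapQuotientEquiv f r).trans ?_
  refine (Equiv.setCongr ?_).trans (Equiv.Set.univ _)
  rw [Set.range_comp, Set.range_eq_univ.2 hf.2, Set.image_univ,
    Set.range_eq_univ]
  exact Quot.mk_surjective

lemma card_quotient_comap_of_bijective (f : α → β) (hf : Function.Bijective f)
    (r : Setoid β) : Nat.card (Quotient (Setoid.comap f r)) = Nat.card (Quotient r) :=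
  Nat.card_congr (comapQuotientEquivOfBijective f hf r)

lemma comap_injective_of_surjective (f : α → β) (hf : Function.Surjective f) :
    Function.Injective (fun r : Setoid β => Setoid.comap f r) := by
  intro r s h
  replace h : Setoid.comap f r = Setoid.comap f s := h
  refine Setoid.ext fun x y => ?_
  obtain ⟨a, rfl⟩ := hf x
  obtain ⟨b, rfl⟩ := hf y
  constructor
  · intro hr
    have : (Setoid.comap f r).r a b := hr
    rw [h] at this
    exact this
  · intro hs
    have : (Setoid.comap f s).r a b := hs
    rw [← h] at this
    exact this

/-- `Quotient (extendSetoid U A) ≃ ↥Uᶜ ⊕ Quotient A`. -/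
noncomputable def extendSetoidQuotientEquiv {V : Type} (U : Set V) (A : Setoid U) :
    Quotient (extendSetoid U A) ≃ {v : V // v ∉ U} ⊕ Quotient A := by
  classical
  refine ⟨Quotient.lift (fun v => if h : v ∈ U then Sum.inr (Quotient.mk A ⟨v, h⟩)
      else Sum.inl ⟨v, h⟩) ?_,
    Sum.elim (fun u => Quotient.mk (extendSetoid U A) u.1)
      (Quotient.lift (fun u : U => Quotient.mk (extendSetoid U A) u.1) ?_), ?_, ?_⟩
  · rintro v w (rfl | ⟨hv, hw, hr⟩)
    · rfl
    · simp only [dif_pos hv, dif_pos hw]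
      exact congrArg Sum.inr (Quotient.sound hr)
  · intro u u' h
    exact Quotient.sound (Or.inr ⟨u.2, u'.2, h⟩)
  · intro q
    obtain ⟨v, rfl⟩ := Quotient.exists_rep q
    by_cases h : v ∈ U
    · simp only [Quotient.lift_mk, dif_pos h, Sum.elim_inr, Quotient.lift_mk]
    · simp only [Quotient.lift_mk, dif_neg h, Sum.elim_inl]
  · rintro (⟨v, hv⟩ | q)
    · simp only [Sum.elim_inl, Quotient.lift_mk, dif_neg hv]
    · obtain ⟨u, rfl⟩ := Quotient.exists_rep q
      simp only [Sum.elim_inr, Quotient.lift_mk, dif_pos u.2]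

lemma card_quotient_extendSetoid {V : Type} [Fintype V] (U : Set V) (A : Setoid U) :
    Nat.card (Quotient (extendSetoid U A)) + Nat.card U
      = Fintype.card V + Nat.card (Quotient A) := by
  classical
  have h1 := Nat.card_congr (extendSetoidQuotientEquiv U A)
  have h2 : Nat.card ↥U + Nat.card {v : V // v ∉ U} = Fintype.card V := by
    rw [← Nat.card_eq_fintype_card,
      ← Nat.card_congr (Equiv.sumCompl (fun v : V => v ∈ U)), Nat.card_sum]
  rw [h1, Nat.card_sum]
  omega

lemma setoid_comap_comap {γ : Type} (f : α → β) (g : β → γ) (r : Setoid γ) :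
    Setoid.comap f (Setoid.comap g r) = Setoid.comap (g ∘ f) r := rfl

lemma setoid_comap_id (r : Setoid α) : Setoid.comap id r = r := by
  refine Setoid.ext fun x y => Iff.rfl

end SetoidCount
section Key
open Relation

/-- Bundled data for the key component count. -/
structure KeySetup (G K H : Multigraph) (U : Set G.V) where
  sg : NSum G K H U
  S₁ : Finset K.E
  S₂ : Finset H.E
  A : Setoid ↥U
  hA : K.part (sg.ιK ⁻¹' U) S₁ = sg.pullK A
  S : Finset G.E
  hS1 : ∀ a : K.E, sg.edgeEquiv.symm (Sum.inl a) ∈ S ↔ a ∈ S₁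
  hS2 : ∀ b : H.E, sg.edgeEquiv.symm (Sum.inr b) ∈ S ↔ b ∈ S₂

namespace KeySetup

variable {G K H : Multigraph} {U : Set G.V} (X : KeySetup G K H U)

abbrev QG := Quotient (EqvGen.setoid (G.rel X.S))
abbrev QK := Quotient (EqvGen.setoid (K.rel X.S₁))
abbrev QHA := Quotient (EqvGen.setoid ((X.sg.contractH X.A).rel X.S₂))

lemma subsetK : U ⊆ Set.range X.sg.ιK := fun u hu =>
  ((Set.ext_iff.1 X.sg.inter u).2 hu).1

lemma subsetH : U ⊆ Set.range X.sg.ιH := fun u hu =>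
  ((Set.ext_iff.1 X.sg.inter u).2 hu).2

lemma cover_mem (v : G.V) (h : v ∉ Set.range X.sg.ιK) : v ∈ Set.range X.sg.ιH := by
  have hv : v ∈ Set.range X.sg.ιK ∪ Set.range X.sg.ιH := by
    rw [X.sg.cover]; exact Set.mem_univ v
  exact hv.resolve_left h

lemma relK_to_G (v w : K.V) (h : K.rel X.S₁ v w) :
    EqvGen (G.rel X.S) (X.sg.ιK v) (X.sg.ιK w) := by
  obtain ⟨a, ha, hends⟩ := h
  refine EqvGen.rel _ _ ⟨X.sg.edgeEquiv.symm (Sum.inl a), (X.hS1 a).2 ha, ?_⟩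
  rw [X.sg.endsK a, hends, Sym2.map_pair_eq]

lemma eqvK_to_G (v w : K.V) (h : EqvGen (K.rel X.S₁) v w) :
    EqvGen (G.rel X.S) (X.sg.ιK v) (X.sg.ιK w) :=
  eqvGen_mono' X.relK_to_G v w h

lemma relH_to_G (v w : H.V) (b : H.E) (hb : b ∈ X.S₂) (hends : H.ends b = s(v, w)) :
    EqvGen (G.rel X.S) (X.sg.ιH v) (X.sg.ιH w) := by
  refine EqvGen.rel _ _ ⟨X.sg.edgeEquiv.symm (Sum.inr b), (X.hS2 b).2 hb, ?_⟩
  rw [X.sg.endsH b, hends, Sym2.map_pair_eq]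

lemma A_iff (u u' : K.V) (hu : X.sg.ιK u ∈ U) (hu' : X.sg.ιK u' ∈ U) :
    X.A.r ⟨X.sg.ιK u, hu⟩ ⟨X.sg.ιK u', hu'⟩ ↔ EqvGen (K.rel X.S₁) u u' := by
  have h1 : (X.sg.pullK X.A).r ⟨u, hu⟩ ⟨u', hu'⟩ ↔
      X.A.r ⟨X.sg.ιK u, hu⟩ ⟨X.sg.ιK u', hu'⟩ := Iff.rfl
  rw [← h1, ← X.hA]
  exact Iff.rfl

lemma A_to_G (u u' : ↥U) (h : X.A.r u u') : EqvGen (G.rel X.S) u.1 u'.1 := by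
  obtain ⟨kv, hkv⟩ := X.subsetK u.2
  obtain ⟨kv', hkv'⟩ := X.subsetK u'.2
  have hm : X.sg.ιK kv ∈ U := by rw [hkv]; exact u.2
  have hm' : X.sg.ιK kv' ∈ U := by rw [hkv']; exact u'.2
  have e1 : (⟨X.sg.ιK kv, hm⟩ : ↥U) = u := Subtype.ext hkv
  have e1' : (⟨X.sg.ιK kv', hm'⟩ : ↥U) = u' := Subtype.ext hkv'
  have h1 : X.A.r ⟨X.sg.ιK kv, hm⟩ ⟨X.sg.ιK kv', hm'⟩ := by rw [e1, e1']; exact h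
  have h2 := (X.A_iff kv kv' hm hm').1 h1
  have h3 := X.eqvK_to_G kv kv' h2
  rwa [hkv, hkv'] at h3

/-- `ψK : Q_K → Q_G`. -/
noncomputable def psiK : X.QK → X.QG :=
  Quotient.lift (fun v => Quotient.mk _ (X.sg.ιK v))
    (fun v w h => Quotient.sound
      (show (EqvGen.setoid (G.rel X.S)).r _ _ from X.eqvK_to_G v w h))

@[simp] lemma psiK_mk (v : K.V) :
    X.psiK (Quotient.mk _ v) = Quotient.mk _ (X.sg.ιK v) := rfl

lemma ext_resp (v w : H.V)
    (h : (extendSetoid (X.sg.ιH ⁻¹' U) (X.sg.pullH X.A)).r v w) :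
    (Quotient.mk (EqvGen.setoid (G.rel X.S)) (X.sg.ιH v)) = Quotient.mk _ (X.sg.ιH w) := by
  rcases h with rfl | ⟨hv, hw, hr⟩
  · rfl
  · exact Quotient.sound (show (EqvGen.setoid (G.rel X.S)).r _ _ from
      X.A_to_G ⟨X.sg.ιH v, hv⟩ ⟨X.sg.ιH w, hw⟩ hr)

/-- `f_H : V(H/A) → Q_G`. -/
noncomputable def fH : (X.sg.contractH X.A).V → X.QG :=
  Quotient.lift (fun v : H.V => Quotient.mk _ (X.sg.ιH v)) X.ext_resp

@[simp] lemma fH_mk (v : H.V) :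
    X.fH (Quotient.mk _ v) = Quotient.mk _ (X.sg.ιH v) := rfl

lemma fH_resp (p q : (X.sg.contractH X.A).V) (h : (X.sg.contractH X.A).rel X.S₂ p q) :
    X.fH p = X.fH q := by
  obtain ⟨b, hb, hends⟩ := h
  obtain ⟨v, w, hvw⟩ := sym2_exists_s14 (H.ends b)
  have hmap : ((X.sg.contractH X.A).ends b) =
      s(Quotient.mk _ v, Quotient.mk _ w) := by
    show (H.ends b).map _ = _
    rw [hvw, Sym2.map_pair_eq]
  rw [hmap] at hends
  have hrel := X.relH_to_G v w b hb hvw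
  rcases Sym2.eq_iff.1 hends with ⟨hp, hq⟩ | ⟨hp, hq⟩
  · rw [← hp, ← hq]
    exact Quotient.sound (show (EqvGen.setoid (G.rel X.S)).r _ _ from hrel)
  · rw [← hp, ← hq]
    exact (Quotient.sound (show (EqvGen.setoid (G.rel X.S)).r _ _ from hrel)).symm

/-- `χ : Q_{H/A} → Q_G`. -/
noncomputable def chi : X.QHA → X.QG :=
  Quotient.lift X.fH (eqvGen_const X.fH_resp)

@[simp] lemma chi_mk (p : (X.sg.contractH X.A).V) :
    X.chi (Quotient.mk _ p) = X.fH p := rfl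

/-- Predicate: a component of `(V(K), S₁)` meets `U`. -/
def Mt : X.QK → Prop := fun c => ∃ u : ↥(X.sg.ιK ⁻¹' U), Quotient.mk _ u.1 = c

/-- Components of `(V(K), S₁)` not meeting `U`. -/
def Comps := {c : X.QK // ¬ X.Mt c}

noncomputable instance : Finite X.QK := Quotient.finite _
noncomputable instance : Finite X.QG := Quotient.finite _
noncomputable instance : Finite X.QHA := Quotient.finite _
noncomputable instance : Finite X.Comps := by unfold Comps; infer_instance

/-- The map sending an `H`-vertex to (inl of) its component in `H/A`. -/
noncomputable def toHA (w : H.V) : X.QHA ⊕ X.Comps :=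
  Sum.inl (Quotient.mk _ (Quotient.mk (extendSetoid (X.sg.ιH ⁻¹' U) (X.sg.pullH X.A)) w))

lemma toHA_eq (w w' : H.V) (hw : X.sg.ιH w ∈ U) (hw' : X.sg.ιH w' ∈ U)
    (h : X.A.r ⟨X.sg.ιH w, hw⟩ ⟨X.sg.ιH w', hw'⟩) : X.toHA w = X.toHA w' := by
  unfold toHA
  congr 1
  refine congrArg _ (Quotient.sound ?_)
  exact Or.inr ⟨hw, hw', h⟩

/-- Key well-definedness: components linked through `U` give equal `H/A`-classes. -/
lemma toHA_eq_of_eqvK (u u' : K.V) (hu : X.sg.ιK u ∈ U) (hu' : X.sg.ιK u' ∈ U)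
    (h : EqvGen (K.rel X.S₁) u u') (w w' : H.V)
    (hw : X.sg.ιH w = X.sg.ιK u) (hw' : X.sg.ιH w' = X.sg.ιK u') :
    X.toHA w = X.toHA w' := by
  have hmw : X.sg.ιH w ∈ U := by rw [hw]; exact hu
  have hmw' : X.sg.ιH w' ∈ U := by rw [hw']; exact hu'
  refine X.toHA_eq w w' hmw hmw' ?_
  have hAr : X.A.r ⟨X.sg.ιK u, hu⟩ ⟨X.sg.ιK u', hu'⟩ := (X.A_iff u u' hu hu').2 h
  have e1 : (⟨X.sg.ιH w, hmw⟩ : ↥U) = ⟨X.sg.ιK u, hu⟩ := Subtype.ext hw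
  have e2 : (⟨X.sg.ιH w', hmw'⟩ : ↥U) = ⟨X.sg.ιK u', hu'⟩ := Subtype.ext hw'
  rw [e1, e2]
  exact hAr

/-- The inverse map on vertices. -/
noncomputable def rho0 (v : G.V) : X.QHA ⊕ X.Comps :=
  if h : v ∈ Set.range X.sg.ιK then
    if hc : X.Mt (Quotient.mk _ h.choose) then
      X.toHA (X.subsetH hc.choose.2).choose
    else Sum.inr ⟨Quotient.mk _ h.choose, hc⟩
  else X.toHA (X.cover_mem v h).choose

lemma rho0_K_meets (v' : K.V) (u : ↥(X.sg.ιK ⁻¹' U)) (w : H.V)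
    (h : EqvGen (K.rel X.S₁) u.1 v') (hw : X.sg.ιH w = X.sg.ιK u.1) :
    X.rho0 (X.sg.ιK v') = X.toHA w := by
  have hr : X.sg.ιK v' ∈ Set.range X.sg.ιK := ⟨v', rfl⟩
  have hch : hr.choose = v' := X.sg.injK hr.choose_spec
  have hmt : X.Mt (Quotient.mk _ hr.choose) := by
    rw [hch]
    exact ⟨u, Quotient.sound (show (EqvGen.setoid (K.rel X.S₁)).r _ _ from h)⟩
  rw [rho0, dif_pos hr, dif_pos hmt]
  -- now : toHA (subsetH hmt.choose.2).choose = toHA w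
  set u₀ := hmt.choose with hu₀
  have hspec : Quotient.mk _ u₀.1 = Quotient.mk (EqvGen.setoid (K.rel X.S₁)) hr.choose :=
    hmt.choose_spec
  rw [hch] at hspec
  have h0 : EqvGen (K.rel X.S₁) u₀.1 v' := quot_mk_eq_iff.1 hspec
  have h1 : EqvGen (K.rel X.S₁) u₀.1 u.1 :=
    EqvGen.trans _ _ _ h0 (EqvGen.symm _ _ h)
  exact X.toHA_eq_of_eqvK u₀.1 u.1 u₀.2 u.2 h1 _ w
    (X.subsetH hmt.choose.2).choose_spec hw

lemma rho0_K_not_meets (v' : K.V) (hc : ¬ X.Mt (Quotient.mk _ v')) :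
    X.rho0 (X.sg.ιK v') = Sum.inr ⟨Quotient.mk _ v', hc⟩ := by
  have hr : X.sg.ιK v' ∈ Set.range X.sg.ιK := ⟨v', rfl⟩
  have hch : hr.choose = v' := X.sg.injK hr.choose_spec
  have hmt : ¬ X.Mt (Quotient.mk _ hr.choose) := by rw [hch]; exact hc
  rw [rho0, dif_pos hr, dif_neg hmt]
  exact congrArg Sum.inr (Subtype.ext
    (congrArg (Quotient.mk (EqvGen.setoid (K.rel X.S₁))) hch))

lemma rho0_H (w : H.V) : X.rho0 (X.sg.ιH w) = X.toHA w := by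
  by_cases h : X.sg.ιH w ∈ Set.range X.sg.ιK
  · have hmem : X.sg.ιH w ∈ U :=
      (Set.ext_iff.1 X.sg.inter _).1 ⟨h, ⟨w, rfl⟩⟩
    obtain ⟨v', hv'⟩ := h
    have hmemK : X.sg.ιK v' ∈ U := by rw [hv']; exact hmem
    have := X.rho0_K_meets v' ⟨v', hmemK⟩ w (EqvGen.refl _) (by rw [hv'])
    rw [hv'] at this
    exact this
  · rw [rho0, dif_neg h]
    have hspec := (X.cover_mem _ h).choose_spec
    have : (X.cover_mem _ h).choose = w := X.sg.injH hspec
    rw [this]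

lemma rho0_const (v w : G.V) (h : G.rel X.S v w) : X.rho0 v = X.rho0 w := by
  obtain ⟨g, hg, hends⟩ := h
  rcases hsum : X.sg.edgeEquiv g with a | b
  · -- a K-edge
    have hgeq : g = X.sg.edgeEquiv.symm (Sum.inl a) := by
      rw [← hsum, Equiv.symm_apply_apply]
    have ha : a ∈ X.S₁ := (X.hS1 a).1 (hgeq ▸ hg)
    obtain ⟨v', w', hvw⟩ := sym2_exists_s14 (K.ends a)
    have hmap : G.ends g = s(X.sg.ιK v', X.sg.ιK w') := by
      rw [hgeq, X.sg.endsK a, hvw, Sym2.map_pair_eq]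
    rw [hmap] at hends
    have hkey : ∀ p q : K.V, K.ends a = s(p, q) → X.rho0 (X.sg.ιK p) = X.rho0 (X.sg.ιK q) := by
      intro p q hpq
      have hrel : EqvGen (K.rel X.S₁) p q := EqvGen.rel _ _ ⟨a, ha, hpq⟩
      by_cases hc : X.Mt (Quotient.mk _ p)
      · obtain ⟨u, hu⟩ := hc
        have h1 : EqvGen (K.rel X.S₁) u.1 p := quot_mk_eq_iff.1 hu
        have h2 : EqvGen (K.rel X.S₁) u.1 q := EqvGen.trans _ _ _ h1 hrel
        obtain ⟨w₀, hw₀⟩ := X.subsetH u.2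
        rw [X.rho0_K_meets p u w₀ h1 hw₀, X.rho0_K_meets q u w₀ h2 hw₀]
      · have hcq : ¬ X.Mt (Quotient.mk _ q) := by
          have : (Quotient.mk (EqvGen.setoid (K.rel X.S₁)) p) = Quotient.mk _ q :=
            quot_mk_eq_iff.2 hrel
          rw [← this]
          exact hc
        rw [X.rho0_K_not_meets p hc, X.rho0_K_not_meets q hcq]
        exact congrArg Sum.inr (Subtype.ext (quot_mk_eq_iff.2 hrel))
    rcases Sym2.eq_iff.1 hends with ⟨hp, hq⟩ | ⟨hp, hq⟩
    · rw [← hp, ← hq]; exact hkey v' w' hvw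
    · rw [← hp, ← hq]; exact (hkey v' w' hvw).symm
  · -- an H-edge
    have hgeq : g = X.sg.edgeEquiv.symm (Sum.inr b) := by
      rw [← hsum, Equiv.symm_apply_apply]
    have hb : b ∈ X.S₂ := (X.hS2 b).1 (hgeq ▸ hg)
    obtain ⟨v', w', hvw⟩ := sym2_exists_s14 (H.ends b)
    have hmap : G.ends g = s(X.sg.ιH v', X.sg.ιH w') := by
      rw [hgeq, X.sg.endsH b, hvw, Sym2.map_pair_eq]
    rw [hmap] at hends
    have hkey : X.rho0 (X.sg.ιH v') = X.rho0 (X.sg.ιH w') := by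
      rw [X.rho0_H, X.rho0_H]
      unfold toHA
      refine congrArg Sum.inl (Quotient.sound ?_)
      show EqvGen ((X.sg.contractH X.A).rel X.S₂) _ _
      refine EqvGen.rel _ _ ⟨b, hb, ?_⟩
      show (H.ends b).map _ = _
      rw [hvw]
      exact Sym2.map_pair_eq _ _ _
    rcases Sym2.eq_iff.1 hends with ⟨hp, hq⟩ | ⟨hp, hq⟩
    · rw [← hp, ← hq]; exact hkey
    · rw [← hp, ← hq]; exact hkey.symm

/-- The induced map `Q_G → Q_{H/A} ⊕ Comps`. -/
noncomputable def rho : X.QG → X.QHA ⊕ X.Comps :=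
  Quotient.lift X.rho0 (eqvGen_const X.rho0_const)

/-- The forward map. -/
noncomputable def fwd : X.QHA ⊕ X.Comps → X.QG :=
  Sum.elim X.chi (fun c => X.psiK c.1)

lemma left_inv : ∀ z, X.rho (X.fwd z) = z := by
  rintro (q | ⟨c, hc⟩)
  · obtain ⟨p, rfl⟩ := Quotient.exists_rep q
    obtain ⟨w, rfl⟩ := Quotient.exists_rep p
    show X.rho0 (X.sg.ιH w) = _
    rw [X.rho0_H]
    rfl
  · obtain ⟨v', rfl⟩ := Quotient.exists_rep c
    show X.rho0 (X.sg.ιK v') = _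
    rw [X.rho0_K_not_meets v' hc]

lemma right_inv : ∀ q, X.fwd (X.rho q) = q := by
  intro q
  obtain ⟨v, rfl⟩ := Quotient.exists_rep q
  show X.fwd (X.rho0 v) = _
  by_cases h : v ∈ Set.range X.sg.ιK
  · obtain ⟨v', rfl⟩ := h
    by_cases hc : X.Mt (Quotient.mk _ v')
    · obtain ⟨u, hu⟩ := hc
      have h1 : EqvGen (K.rel X.S₁) u.1 v' := quot_mk_eq_iff.1 hu
      obtain ⟨w₀, hw₀⟩ := X.subsetH u.2
      rw [X.rho0_K_meets v' u w₀ h1 hw₀]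
      show (Quotient.mk (EqvGen.setoid (G.rel X.S)) (X.sg.ιH w₀) : X.QG) = _
      refine quot_mk_eq_iff.2 ?_
      rw [hw₀]
      exact X.eqvK_to_G u.1 v' h1
    · rw [X.rho0_K_not_meets v' hc]
      rfl
  · obtain ⟨w, hw⟩ := X.cover_mem v h
    rw [← hw, X.rho0_H]
    rfl

/-- The main bijection. -/
noncomputable def equivMain : X.QHA ⊕ X.Comps ≃ X.QG :=
  ⟨X.fwd, X.rho, X.left_inv, X.right_inv⟩

lemma card_QG : Nat.card X.QG = Nat.card X.QHA + Nat.card X.Comps := by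
  rw [← Nat.card_congr X.equivMain, Nat.card_sum]

/-- The map from `U`-subset-components onto components meeting `U`. -/
noncomputable def equivMeets : Quotient (K.part (X.sg.ιK ⁻¹' U) X.S₁) ≃ {c : X.QK // X.Mt c} := by
  refine ⟨Quotient.lift (fun u : ↥(X.sg.ιK ⁻¹' U) =>
      (⟨Quotient.mk _ u.1, ⟨u, rfl⟩⟩ : {c : X.QK // X.Mt c})) ?_,
    fun c => Quotient.mk _ c.2.choose, ?_, ?_⟩
  · intro u u' h
    exact Subtype.ext (Quotient.sound h)
  · intro q
    obtain ⟨u, rfl⟩ := Quotient.exists_rep q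
    refine Quotient.sound ?_
    show (K.part (X.sg.ιK ⁻¹' U) X.S₁).r _ _
    show EqvGen (K.rel X.S₁) _ _
    exact quot_mk_eq_iff.1 (Exists.choose_spec (⟨u, rfl⟩ :
      ∃ u' : ↥(X.sg.ιK ⁻¹' U), Quotient.mk _ u'.1 = Quotient.mk (EqvGen.setoid (K.rel X.S₁)) u.1))
  · rintro ⟨c, hc⟩
    exact Subtype.ext hc.choose_spec

lemma card_QK : Nat.card X.QK = Nat.card (Quotient X.A) + Nat.card X.Comps := by
  have h1 : Nat.card (Quotient X.A) = Nat.card {c : X.QK // X.Mt c} := by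
    rw [← Nat.card_congr X.equivMeets]
    rw [X.hA]
    have hbij : Function.Bijective (fun v : ↥(X.sg.ιK ⁻¹' U) => (⟨X.sg.ιK v.1, v.2⟩ : ↥U)) := by
      constructor
      · intro a b hab
        exact Subtype.ext (X.sg.injK (congrArg Subtype.val hab))
      · rintro ⟨u, hu⟩
        obtain ⟨kv, hkv⟩ := X.subsetK hu
        exact ⟨⟨kv, by rw [Set.mem_preimage, hkv]; exact hu⟩, Subtype.ext hkv⟩
    exact (card_quotient_comap_of_bijective _ hbij X.A).symm
  have h2 : Nat.card X.QK = Nat.card {c : X.QK // X.Mt c} + Nat.card X.Comps := by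
    classical
    rw [← Nat.card_congr (Equiv.sumCompl X.Mt), Nat.card_sum]
    rfl
  rw [h2, h1]

lemma main_counts :
    G.omega X.S + Nat.card (Quotient X.A) =
      K.omega X.S₁ + (X.sg.contractH X.A).omega X.S₂ ∧
    Nat.card (Quotient X.A) ≤ K.omega X.S₁ := by
  have h1 := X.card_QG
  have h2 := X.card_QK
  constructor
  · show Nat.card X.QG + _ = Nat.card X.QK + Nat.card X.QHA
    omega
  · show _ ≤ Nat.card X.QK
    omega

end KeySetup
end Key
section Corollaries
open Relation

namespace Multigraph

lemma nonempty_of_omegaG_one (M : Multigraph) (h : M.omegaG = 1) : Nonempty M.V := by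
  have h1 : Nat.card (Quotient (EqvGen.setoid (M.rel (Finset.univ : Finset M.E)))) = 1 := h
  have h2 : Nonempty (Quotient (EqvGen.setoid (M.rel (Finset.univ : Finset M.E)))) := by
    rcases (Nat.card_pos_iff).1 (by rw [h1]; exact Nat.one_pos) with ⟨hne, -⟩
    exact hne
  obtain ⟨q⟩ := h2
  obtain ⟨v, -⟩ := Quotient.exists_rep q
  exact ⟨v⟩

lemma one_le_omega (M : Multigraph) (S : Finset M.E) (h : Nonempty M.V) :
    1 ≤ M.omega S := by
  have : Nonempty (Quotient (EqvGen.setoid (M.rel S))) := ⟨Quotient.mk _ h.some⟩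
  exact Nat.card_pos

end Multigraph

/-- Contracting preserves connectivity. -/
lemma contract_omegaG_eq_one (H : Multigraph) (hH : H.omegaG = 1)
    {W : Set H.V} (A : Setoid ↥W) : (H.contract A).omegaG = 1 := by
  have hne : Nonempty H.V := H.nonempty_of_omegaG_one hH
  have hle : (H.contract A).omegaG ≤ H.omegaG := by
    set f0 : H.V → Quotient (EqvGen.setoid ((H.contract A).rel
        (Finset.univ : Finset (H.contract A).E))) :=
      fun v => Quotient.mk _ (Quotient.mk (extendSetoid W A) v) with hf0
    have hconst : ∀ v w, H.rel Finset.univ v w → f0 v = f0 w := by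
      rintro v w ⟨e, he, hends⟩
      rw [hf0]
      refine Quotient.sound (show (EqvGen.setoid ((H.contract A).rel Finset.univ)).r _ _
        from EqvGen.rel _ _ ⟨e, Finset.mem_univ e, ?_⟩)
      show (H.ends e).map _ = _
      rw [hends]
      exact Sym2.map_pair_eq _ _ _
    have hsurj : Function.Surjective
        (Quotient.lift f0 (eqvGen_const hconst) :
          Quotient (EqvGen.setoid (H.rel Finset.univ)) → _) := by
      intro q
      obtain ⟨p, rfl⟩ := Quotient.exists_rep q
      obtain ⟨v, rfl⟩ := Quotient.exists_rep p
      exact ⟨Quotient.mk _ v, rfl⟩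
    exact Nat.card_le_card_of_surjective _ hsurj
  have hge : 1 ≤ (H.contract A).omegaG := by
    refine (H.contract A).one_le_omega _ ?_
    exact ⟨Quotient.mk _ hne.some⟩
  omega

/-- Cardinality of the vertex set of a contraction. -/
lemma card_contract_V (H : Multigraph) {W : Set H.V} (A : Setoid ↥W) :
    Fintype.card (H.contract A).V + Nat.card ↥W
      = Fintype.card H.V + Nat.card (Quotient A) := by
  have h := card_quotient_extendSetoid W A
  have h2 : Fintype.card (H.contract A).V = Nat.card (Quotient (extendSetoid W A)) :=
    (Nat.card_eq_fintype_card).symm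
  omega

namespace NSum

variable {G K H : Multigraph} {U : Set G.V} (sg : NSum G K H U)

/-- The canonical bijection `ι_K ⁻¹ U ≃ U`. -/
lemma mK_bijective :
    Function.Bijective (fun v : ↥(sg.ιK ⁻¹' U) => (⟨sg.ιK v.1, v.2⟩ : ↥U)) := by
  constructor
  · intro a b hab
    exact Subtype.ext (sg.injK (congrArg Subtype.val hab))
  · rintro ⟨u, hu⟩
    have : u ∈ Set.range sg.ιK := ((Set.ext_iff.1 sg.inter u).2 hu).1
    obtain ⟨kv, hkv⟩ := this
    exact ⟨⟨kv, by rw [Set.mem_preimage, hkv]; exact hu⟩, Subtype.ext hkv⟩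

lemma mH_bijective :
    Function.Bijective (fun v : ↥(sg.ιH ⁻¹' U) => (⟨sg.ιH v.1, v.2⟩ : ↥U)) := by
  constructor
  · intro a b hab
    exact Subtype.ext (sg.injH (congrArg Subtype.val hab))
  · rintro ⟨u, hu⟩
    have : u ∈ Set.range sg.ιH := ((Set.ext_iff.1 sg.inter u).2 hu).2
    obtain ⟨hv, hhv⟩ := this
    exact ⟨⟨hv, by rw [Set.mem_preimage, hhv]; exact hu⟩, Subtype.ext hhv⟩

/-- The partition of `U` corresponding to `P(S₁)`. -/
noncomputable def Aof (S₁ : Finset K.E) : Setoid ↥U :=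
  Setoid.comap (Equiv.ofBijective _ sg.mK_bijective).symm (K.part (sg.ιK ⁻¹' U) S₁)

lemma part_eq_pullK_Aof (S₁ : Finset K.E) :
    K.part (sg.ιK ⁻¹' U) S₁ = sg.pullK (sg.Aof S₁) := by
  show _ = Setoid.comap (fun v : ↥(sg.ιK ⁻¹' U) => (⟨sg.ιK v.1, v.2⟩ : ↥U)) (sg.Aof S₁)
  rw [Aof, setoid_comap_comap]
  have : ((Equiv.ofBijective _ sg.mK_bijective).symm ∘
      (fun v : ↥(sg.ιK ⁻¹' U) => (⟨sg.ιK v.1, v.2⟩ : ↥U))) = id := by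
    funext v
    exact (Equiv.ofBijective _ sg.mK_bijective).symm_apply_apply v
  rw [this, setoid_comap_id]

lemma part_eq_pullK_iff (S₁ : Finset K.E) (A : Setoid ↥U) :
    K.part (sg.ιK ⁻¹' U) S₁ = sg.pullK A ↔ A = sg.Aof S₁ := by
  constructor
  · intro h
    refine comap_injective_of_surjective
      (fun v : ↥(sg.ιK ⁻¹' U) => (⟨sg.ιK v.1, v.2⟩ : ↥U)) sg.mK_bijective.2 ?_
    show sg.pullK A = sg.pullK (sg.Aof S₁)
    rw [← h, sg.part_eq_pullK_Aof S₁]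
  · rintro rfl
    exact sg.part_eq_pullK_Aof S₁

lemma card_quotient_pullK (A : Setoid ↥U) :
    Nat.card (Quotient (sg.pullK A)) = Nat.card (Quotient A) :=
  card_quotient_comap_of_bijective _ sg.mK_bijective A

lemma card_quotient_pullH (A : Setoid ↥U) :
    Nat.card (Quotient (sg.pullH A)) = Nat.card (Quotient A) :=
  card_quotient_comap_of_bijective _ sg.mH_bijective A

lemma card_UH : Nat.card ↥(sg.ιH ⁻¹' U) = Nat.card ↥U :=
  Nat.card_congr (Equiv.ofBijective _ sg.mH_bijective)

/-- `|V(G)| + |U| = |V(K)| + |V(H)|`. -/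
lemma card_V_add : (NSum G K H U) → Fintype.card G.V + Nat.card ↥U
    = Fintype.card K.V + Fintype.card H.V := fun sg => by
  have h1 := Set.ncard_union_add_ncard_inter (Set.range sg.ιK) (Set.range sg.ιH)
    (Set.toFinite _) (Set.toFinite _)
  rw [sg.cover, sg.inter, Set.ncard_univ] at h1
  have h2 : (Set.range sg.ιK).ncard = Fintype.card K.V := by
    rw [← Nat.card_coe_set_eq, ← Nat.card_congr (Equiv.ofInjective _ sg.injK),
      Nat.card_eq_fintype_card]
  have h3 : (Set.range sg.ιH).ncard = Fintype.card H.V := by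
    rw [← Nat.card_coe_set_eq, ← Nat.card_congr (Equiv.ofInjective _ sg.injH),
      Nat.card_eq_fintype_card]
  rw [h2, h3, ← Nat.card_coe_set_eq] at h1
  have h4 : Nat.card G.V = Fintype.card G.V := Nat.card_eq_fintype_card
  omega

/-- `|V(H/A)| + |U| = |V(H)| + |A|`. -/
lemma card_contractH_V (A : Setoid ↥U) :
    Fintype.card (sg.contractH A).V + Nat.card ↥U
      = Fintype.card H.V + Nat.card (Quotient A) := by
  have h := card_contract_V H (sg.pullH A)
  rw [sg.card_quotient_pullH, sg.card_UH] at h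
  exact h

/-- The edge-set bijection. -/
noncomputable def edgeFinsetEquiv : Finset G.E ≃ Finset K.E × Finset H.E where
  toFun S := (Finset.univ.filter fun a => sg.edgeEquiv.symm (Sum.inl a) ∈ S,
              Finset.univ.filter fun b => sg.edgeEquiv.symm (Sum.inr b) ∈ S)
  invFun P := Finset.univ.filter fun g => Sum.elim (· ∈ P.1) (· ∈ P.2) (sg.edgeEquiv g)
  left_inv S := by
    ext g
    simp only [Finset.mem_filter, Finset.mem_univ, true_and]
    rcases hg : sg.edgeEquiv g with a | b
    · have : sg.edgeEquiv.symm (Sum.inl a) = g := by rw [← hg, Equiv.symm_apply_apply]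
      simp [this]
    · have : sg.edgeEquiv.symm (Sum.inr b) = g := by rw [← hg, Equiv.symm_apply_apply]
      simp [this]
  right_inv P := by
    refine Prod.ext ?_ ?_
    · ext a
      simp [Equiv.apply_symm_apply]
    · ext b
      simp [Equiv.apply_symm_apply]

lemma edgeFinsetEquiv_symm_mem_left (P : Finset K.E × Finset H.E) (a : K.E) :
    sg.edgeEquiv.symm (Sum.inl a) ∈ sg.edgeFinsetEquiv.symm P ↔ a ∈ P.1 := by
  show _ ∈ Finset.univ.filter _ ↔ _
  simp [Equiv.apply_symm_apply]

lemma edgeFinsetEquiv_symm_mem_right (P : Finset K.E × Finset H.E) (b : H.E) :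
    sg.edgeEquiv.symm (Sum.inr b) ∈ sg.edgeFinsetEquiv.symm P ↔ b ∈ P.2 := by
  show _ ∈ Finset.univ.filter _ ↔ _
  simp [Equiv.apply_symm_apply]

lemma card_edgeFinsetEquiv_symm (P : Finset K.E × Finset H.E) :
    (sg.edgeFinsetEquiv.symm P).card = P.1.card + P.2.card := by
  set S := sg.edgeFinsetEquiv.symm P with hS
  have h1 : S.card = (S.image sg.edgeEquiv).card :=
    (Finset.card_image_of_injective S sg.edgeEquiv.injective).symm
  have h2 : (S.image sg.edgeEquiv).toLeft = P.1 := by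
    ext a
    simp only [Finset.mem_toLeft, Finset.mem_image]
    constructor
    · rintro ⟨g, hg, hge⟩
      have : g = sg.edgeEquiv.symm (Sum.inl a) := by rw [← hge, Equiv.symm_apply_apply]
      rw [this] at hg
      exact (sg.edgeFinsetEquiv_symm_mem_left P a).1 hg
    · intro ha
      exact ⟨sg.edgeEquiv.symm (Sum.inl a), (sg.edgeFinsetEquiv_symm_mem_left P a).2 ha,
        Equiv.apply_symm_apply _ _⟩
  have h3 : (S.image sg.edgeEquiv).toRight = P.2 := by
    ext b
    simp only [Finset.mem_toRight, Finset.mem_image]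
    constructor
    · rintro ⟨g, hg, hge⟩
      have : g = sg.edgeEquiv.symm (Sum.inr b) := by rw [← hge, Equiv.symm_apply_apply]
      rw [this] at hg
      exact (sg.edgeFinsetEquiv_symm_mem_right P b).1 hg
    · intro hb
      exact ⟨sg.edgeEquiv.symm (Sum.inr b), (sg.edgeFinsetEquiv_symm_mem_right P b).2 hb,
        Equiv.apply_symm_apply _ _⟩
  rw [h1, ← Finset.card_toLeft_add_card_toRight, h2, h3]

end NSum
end Corollaries
/-- `T(G;x,1) = Σ_{A ∈ Γ(U)} T_A(K;x,1) · T(H/A;x,1)` for an `n`-sum of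
connected multigraphs. -/
theorem tutte_aux_expansion
    (G K H : Multigraph) (U : Set G.V) (n : ℕ) (hn : 1 ≤ n)
    (sg : NSum G K H U) (hU : Nat.card ↥U = n)
    (hK : K.omegaG = 1) (hH : H.omegaG = 1) (x : ℝ) :
    G.tutte x 1 =
      ∑ A : Setoid ↥U,
        K.tutteAux (sg.ιK ⁻¹' U) (sg.pullK A) x 1 * (sg.contractH A).tutte x 1 := by
  classical
  have hKne : Nonempty K.V := K.nonempty_of_omegaG_one hK
  have hHne : Nonempty H.V := H.nonempty_of_omegaG_one hH
  have hUne : Nonempty ↥U := by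
    by_contra h
    rw [not_nonempty_iff] at h
    rw [Nat.card_of_isEmpty] at hU
    omega
  -- key counting facts for each pair of edge subsets
  have key : ∀ (S₁ : Finset K.E) (S₂ : Finset H.E),
      G.omega (sg.edgeFinsetEquiv.symm (S₁, S₂)) + Nat.card (Quotient (sg.Aof S₁))
        = K.omega S₁ + (sg.contractH (sg.Aof S₁)).omega S₂
      ∧ Nat.card (Quotient (sg.Aof S₁)) ≤ K.omega S₁ := by
    intro S₁ S₂
    exact KeySetup.main_counts ⟨sg, S₁, S₂, sg.Aof S₁, sg.part_eq_pullK_Aof S₁,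
      sg.edgeFinsetEquiv.symm (S₁, S₂),
      fun a => sg.edgeFinsetEquiv_symm_mem_left (S₁, S₂) a,
      fun b => sg.edgeFinsetEquiv_symm_mem_right (S₁, S₂) b⟩
  have hAone : ∀ S₁ : Finset K.E, 1 ≤ Nat.card (Quotient (sg.Aof S₁)) := by
    intro S₁
    have : Nonempty (Quotient (sg.Aof S₁)) := ⟨Quotient.mk _ hUne.some⟩
    exact Nat.card_pos
  have hHAconn : ∀ A : Setoid ↥U, (sg.contractH A).omegaG = 1 := fun A =>
    contract_omegaG_eq_one H hH (sg.pullH A)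
  -- `G` is connected
  have hGconn : G.omegaG = 1 := by
    have huniv : sg.edgeFinsetEquiv.symm (Finset.univ, Finset.univ)
        = (Finset.univ : Finset G.E) := by
      ext g
      simp only [Finset.mem_univ, iff_true]
      show g ∈ Finset.univ.filter _
      rw [Finset.mem_filter]
      refine ⟨Finset.mem_univ g, ?_⟩
      rcases sg.edgeEquiv g with a | b
      · exact Finset.mem_univ a
      · exact Finset.mem_univ b
    have hX := key Finset.univ Finset.univ
    rw [huniv] at hX
    obtain ⟨he, hle⟩ := hX
    have h1 : K.omega (Finset.univ : Finset K.E) = 1 := hK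
    have h2 : (sg.contractH (sg.Aof Finset.univ)).omega (Finset.univ : Finset H.E) = 1 :=
      hHAconn (sg.Aof Finset.univ)
    have h3 := hAone (Finset.univ : Finset K.E)
    show G.omega Finset.univ = 1
    omega
  -- rewrite the left-hand side as a double sum
  have hLHS : G.tutte x 1 = ∑ P : Finset K.E × Finset H.E,
      (x - 1) ^ (G.omega (sg.edgeFinsetEquiv.symm P) - G.omegaG) *
        (1 - 1 : ℝ) ^ (G.omega (sg.edgeFinsetEquiv.symm P) +
          (sg.edgeFinsetEquiv.symm P).card - Fintype.card G.V) := by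
    refine Fintype.sum_equiv sg.edgeFinsetEquiv _ _ fun S => ?_
    rw [Equiv.symm_apply_apply]
  rw [hLHS, Fintype.sum_prod_type]
  -- rewrite each RHS summand
  have hRHS : ∀ A : Setoid ↥U,
      K.tutteAux (sg.ιK ⁻¹' U) (sg.pullK A) x 1 * (sg.contractH A).tutte x 1
      = ∑ S₁ : Finset K.E, (if A = sg.Aof S₁ then
          (x - 1) ^ (K.omega S₁ - Nat.card (Quotient (sg.pullK A))) *
            (1 - 1 : ℝ) ^ (K.omega S₁ + S₁.card - Fintype.card K.V) *
            (sg.contractH A).tutte x 1 else 0) := by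
    intro A
    rw [Multigraph.tutteAux, Finset.sum_mul]
    refine Finset.sum_congr rfl fun S₁ _ => ?_
    rw [ite_mul, zero_mul]
    exact if_congr (sg.part_eq_pullK_iff S₁ A) rfl rfl
  simp only [hRHS]
  rw [Finset.sum_comm (f := fun (A : Setoid ↥U) (S₁ : Finset K.E) =>
    (if A = sg.Aof S₁ then
      (x - 1) ^ (K.omega S₁ - Nat.card (Quotient (sg.pullK A))) *
        (1 - 1 : ℝ) ^ (K.omega S₁ + S₁.card - Fintype.card K.V) *
        (sg.contractH A).tutte x 1 else 0))]
  -- collapse the inner sum over `A`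
  have hcollapse : ∀ S₁ : Finset K.E,
      (∑ A : Setoid ↥U, (if A = sg.Aof S₁ then
          (x - 1) ^ (K.omega S₁ - Nat.card (Quotient (sg.pullK A))) *
            (1 - 1 : ℝ) ^ (K.omega S₁ + S₁.card - Fintype.card K.V) *
            (sg.contractH A).tutte x 1 else 0))
      = (x - 1) ^ (K.omega S₁ - Nat.card (Quotient (sg.pullK (sg.Aof S₁)))) *
          (1 - 1 : ℝ) ^ (K.omega S₁ + S₁.card - Fintype.card K.V) *
          (sg.contractH (sg.Aof S₁)).tutte x 1 := by
    intro S₁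
    rw [Finset.sum_ite_eq' Finset.univ (sg.Aof S₁)
      (fun A => (x - 1) ^ (K.omega S₁ - Nat.card (Quotient (sg.pullK A))) *
        (1 - 1 : ℝ) ^ (K.omega S₁ + S₁.card - Fintype.card K.V) *
        (sg.contractH A).tutte x 1)]
    rw [if_pos (Finset.mem_univ _)]
  refine Finset.sum_congr rfl fun S₁ _ => ?_
  rw [hcollapse S₁]
  -- expand the inner Tutte polynomial and distribute
  rw [Multigraph.tutte, Finset.mul_sum]
  refine Finset.sum_congr rfl fun S₂ _ => ?_
  -- pointwise identity
  obtain ⟨hkey, hle⟩ := key S₁ S₂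
  have h1 := hAone S₁
  have h2 : 1 ≤ (sg.contractH (sg.Aof S₁)).omega S₂ :=
    (sg.contractH (sg.Aof S₁)).one_le_omega S₂ ⟨Quotient.mk _ hHne.some⟩
  have h3 := K.card_le_omega_add_card S₁
  have h4 := (sg.contractH (sg.Aof S₁)).card_le_omega_add_card S₂
  have h5 := G.card_le_omega_add_card (sg.edgeFinsetEquiv.symm (S₁, S₂))
  have h6 := sg.card_V_add
  have h7 := sg.card_contractH_V (sg.Aof S₁)
  have h8 : Nat.card (Quotient (sg.pullK (sg.Aof S₁))) = Nat.card (Quotient (sg.Aof S₁)) :=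
    sg.card_quotient_pullK _
  have hcard : (sg.edgeFinsetEquiv.symm (S₁, S₂)).card = S₁.card + S₂.card :=
    sg.card_edgeFinsetEquiv_symm (S₁, S₂)
  rw [hGconn, hHAconn (sg.Aof S₁)]
  have E1 : G.omega (sg.edgeFinsetEquiv.symm (S₁, S₂)) - 1
      = (K.omega S₁ - Nat.card (Quotient (sg.pullK (sg.Aof S₁))))
        + ((sg.contractH (sg.Aof S₁)).omega S₂ - 1) := by omega
  have E2 : G.omega (sg.edgeFinsetEquiv.symm (S₁, S₂))
        + (sg.edgeFinsetEquiv.symm (S₁, S₂)).card - Fintype.card G.V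
      = (K.omega S₁ + S₁.card - Fintype.card K.V)
        + ((sg.contractH (sg.Aof S₁)).omega S₂ + @Finset.card (sg.contractH (sg.Aof S₁)).E S₂
            - Fintype.card (sg.contractH (sg.Aof S₁)).V) := by
    have h9 : @Finset.card (sg.contractH (sg.Aof S₁)).E S₂ = @Finset.card H.E S₂ := rfl
    omega
  rw [E1, E2, pow_add, pow_add]
  ring
end

section
/- Let K be a connected multigraph with a distinguished n-element subset U of its vertices (n ≥ 1), let A ∈ Γ(U), and let x be a real number. Then T(K/A;x,1) = Σ_{B ∈ Γ(U)} δ · (x−1)^{|A∧B|−1} · T_B(K;x,1), where δ = 1 if |A∧B| + n = |A| + |B| and δ = 0 otherwise. -/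
attribute [local instance] Classical.propDecidable

section AuxLemmas

open Relation

variable {V : Type}

lemma eqvGen_pair_cases {r : V → V → Prop} {a b x y : V}
    (h : EqvGen (fun v w => r v w ∨ s(a, b) = s(v, w)) x y) :
    EqvGen r x y ∨ (EqvGen r x a ∧ EqvGen r y b) ∨ (EqvGen r x b ∧ EqvGen r y a) := by
  induction h with
  | rel v w h =>
    rcases h with h | h
    · exact Or.inl (EqvGen.rel _ _ h)
    · rw [Sym2.eq_iff] at h
      rcases h with ⟨rfl, rfl⟩ | ⟨rfl, rfl⟩
      · exact Or.inr (Or.inl ⟨EqvGen.refl _, EqvGen.refl _⟩)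
      · exact Or.inr (Or.inr ⟨EqvGen.refl _, EqvGen.refl _⟩)
  | refl v => exact Or.inl (EqvGen.refl _)
  | symm v w _ ih =>
    rcases ih with h | ⟨h1, h2⟩ | ⟨h1, h2⟩
    · exact Or.inl (EqvGen.symm _ _ h)
    · exact Or.inr (Or.inr ⟨h2, h1⟩)
    · exact Or.inr (Or.inl ⟨h2, h1⟩)
  | trans u v w _ _ ih1 ih2 =>
    rcases ih1 with h | ⟨h1, h2⟩ | ⟨h1, h2⟩ <;>
      rcases ih2 with g | ⟨g1, g2⟩ | ⟨g1, g2⟩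
    · exact Or.inl (h.trans _ _ _ g)
    · exact Or.inr (Or.inl ⟨h.trans _ _ _ g1, g2⟩)
    · exact Or.inr (Or.inr ⟨h.trans _ _ _ g1, g2⟩)
    · exact Or.inr (Or.inl ⟨h1, (g.symm _ _).trans _ _ _ h2⟩)
    · exact Or.inl ((h1.trans _ _ _ (g1.symm _ _)).trans _ _ _ (h2.trans _ _ _ (g2.symm _ _)))
    · exact Or.inl (h1.trans _ _ _ (g2.symm _ _))
    · exact Or.inr (Or.inr ⟨h1, (g.symm _ _).trans _ _ _ h2⟩)
    · exact Or.inl (h1.trans _ _ _ (g2.symm _ _))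
    · exact Or.inl ((h1.trans _ _ _ (g1.symm _ _)).trans _ _ _ (h2.trans _ _ _ (g2.symm _ _)))

lemma card_quot_le_pair [Finite V] (r : V → V → Prop) (a b : V) :
    Nat.card (Quotient (EqvGen.setoid r)) ≤
      Nat.card (Quotient (EqvGen.setoid (fun v w => r v w ∨ s(a, b) = s(v, w)))) + 1 := by
  classical
  set R := EqvGen.setoid r with hR
  set R' := EqvGen.setoid (fun v w => r v w ∨ s(a, b) = s(v, w)) with hR'
  let π : Quotient R → Quotient R' :=
    Quotient.lift (fun v => (Quotient.mk R' v)) fun v w h =>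
      Quotient.sound (Relation.EqvGen.mono (fun x y hxy => Or.inl hxy) v w h)
  let g : Quotient R → Quotient R' ⊕ Unit := fun q =>
    if q = Quotient.mk R b then Sum.inr () else Sum.inl (π q)
  have hg : Function.Injective g := by
    intro q1 q2 h
    simp only [g] at h
    by_cases h1 : q1 = Quotient.mk R b <;> by_cases h2 : q2 = Quotient.mk R b
    · exact h1.trans h2.symm
    · rw [if_pos h1, if_neg h2] at h; exact absurd h (by simp)
    · rw [if_neg h1, if_pos h2] at h; exact absurd h (by simp)
    · rw [if_neg h1, if_neg h2] at h
      replace h := Sum.inl.inj h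
      obtain ⟨v, rfl⟩ := Quotient.exists_rep q1
      obtain ⟨w, rfl⟩ := Quotient.exists_rep q2
      have hvw : R' v w := Quotient.exact h
      rcases eqvGen_pair_cases hvw with hc | ⟨hc1, hc2⟩ | ⟨hc1, hc2⟩
      · exact Quotient.sound hc
      · exact absurd (Quotient.sound hc2 : Quotient.mk R w = Quotient.mk R b) h2
      · exact absurd (Quotient.sound hc1 : Quotient.mk R v = Quotient.mk R b) h1
  calc Nat.card (Quotient R) ≤ Nat.card (Quotient R' ⊕ Unit) :=
        Nat.card_le_card_of_injective g hg
    _ = Nat.card (Quotient R') + 1 := by simp [Nat.card_sum]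

namespace Multigraph

lemma rel_insert (G : Multigraph) (S : Finset G.E) (e : G.E) {a b : G.V}
    (hab : G.ends e = s(a, b)) :
    G.rel (insert e S) = fun v w => G.rel S v w ∨ s(a, b) = s(v, w) := by
  funext v w
  apply propext
  constructor
  · rintro ⟨e', he', h⟩
    rcases Finset.mem_insert.mp he' with rfl | he'
    · exact Or.inr (hab ▸ h.symm ▸ rfl)
    · exact Or.inl ⟨e', he', h⟩
  · rintro (⟨e', he', h⟩ | h)
    · exact ⟨e', Finset.mem_insert_of_mem he', h⟩
    · exact ⟨e, Finset.mem_insert_self e S, hab.trans h⟩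

lemma omega_le_insert (G : Multigraph) (S : Finset G.E) (e : G.E) :
    G.omega S ≤ G.omega (insert e S) + 1 := by
  obtain ⟨a, b, hab⟩ : ∃ a b, G.ends e = s(a, b) := by
    induction G.ends e using Sym2.ind with
    | _ a b => exact ⟨a, b, rfl⟩
  have := card_quot_le_pair (G.rel S) a b
  unfold omega
  rw [G.rel_insert S e hab]
  exact this

lemma omega_empty_s15 (G : Multigraph) : G.omega ∅ = Fintype.card G.V := by
  have h1 : EqvGen.setoid (G.rel (∅ : Finset G.E)) = ⊥ := by
    refine le_antisymm (Setoid.eqvGen_le fun x y h => ?_) bot_le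
    obtain ⟨e', he', -⟩ := h
    exact absurd he' (Finset.notMem_empty e')
  unfold omega
  rw [h1, ← Nat.card_eq_fintype_card]
  refine (Nat.card_congr (Equiv.ofBijective (Quotient.mk ⊥) ⟨fun v w h => ?_, fun q => Quotient.exists_rep q⟩)).symm
  exact Quotient.exact h

lemma card_le_omega_add_card_s15 (G : Multigraph) (S : Finset G.E) :
    Fintype.card G.V ≤ G.omega S + S.card := by
  classical
  induction S using Finset.induction_on with
  | empty => rw [G.omega_empty_s15]; simp
  | @insert e S he ih =>
    have h1 := G.omega_le_insert S e
    rw [Finset.card_insert_of_notMem he]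
    omega

end Multigraph

lemma sup_extend_cases {U : Set V} {R : Setoid V} {A : Setoid U} {v w : V}
    (h : (R ⊔ extendSetoid U A) v w) :
    R v w ∨ ∃ u1 u2 : U, R v u1 ∧ R w u2 ∧ (A ⊔ Setoid.comap Subtype.val R) u1 u2 := by
  rw [Setoid.sup_eq_eqvGen] at h
  have h' : EqvGen (fun x y => R x y ∨ (extendSetoid U A) x y) v w := h
  clear h
  induction h' with
  | rel v w h =>
    rcases h with h | h
    · exact Or.inl h
    · rcases h with rfl | ⟨hv, hw, hA⟩
      · exact Or.inl (R.refl v)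
      · exact Or.inr ⟨⟨v, hv⟩, ⟨w, hw⟩, R.refl v, R.refl w,
          Setoid.le_def.mp le_sup_left hA⟩
  | refl v => exact Or.inl (R.refl v)
  | symm v w _ ih =>
    rcases ih with h | ⟨u1, u2, h1, h2, hJ⟩
    · exact Or.inl (R.symm h)
    · exact Or.inr ⟨u2, u1, h2, h1, (A ⊔ Setoid.comap Subtype.val R).symm hJ⟩
  | trans v w z _ _ ih1 ih2 =>
    rcases ih1 with h | ⟨u1, u2, h1, h2, hJ⟩ <;>
      rcases ih2 with g | ⟨u3, u4, g1, g2, gJ⟩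
    · exact Or.inl (R.trans h g)
    · exact Or.inr ⟨u3, u4, R.trans h g1, g2, gJ⟩
    · exact Or.inr ⟨u1, u2, h1, R.trans (R.symm g) h2, hJ⟩
    · refine Or.inr ⟨u1, u4, h1, g2, ?_⟩
      have h23 : (Setoid.comap Subtype.val R) u2 u3 := R.trans (R.symm h2) g1
      exact (A ⊔ Setoid.comap Subtype.val R).trans hJ
        ((A ⊔ Setoid.comap Subtype.val R).trans (Setoid.le_def.mp le_sup_right h23) gJ)

lemma comap_sup_extend {U : Set V} (R : Setoid V) (A : Setoid U) :
    Setoid.comap (Subtype.val : U → V) (R ⊔ extendSetoid U A) =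
      A ⊔ Setoid.comap Subtype.val R := by
  apply Setoid.ext
  intro u1 u2
  constructor
  · intro h
    rcases sup_extend_cases h with h | ⟨u3, u4, h1, h2, hJ⟩
    · exact Setoid.le_def.mp le_sup_right h
    · refine (A ⊔ Setoid.comap Subtype.val R).trans
        (Setoid.le_def.mp le_sup_right (h1 : R u1.val u3.val)) ?_
      exact (A ⊔ Setoid.comap Subtype.val R).trans hJ
        (Setoid.le_def.mp le_sup_right ((R.symm h2) : R u4.val u2.val))
  · intro h
    refine Setoid.le_def.mp (sup_le ?_ ?_ : A ⊔ Setoid.comap Subtype.val R ≤ _) h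
    · intro a b hab
      exact Setoid.le_def.mp le_sup_right (Or.inr ⟨a.2, b.2, hab⟩)
    · intro a b hab
      exact Setoid.le_def.mp le_sup_left hab

lemma card_sup_extend [Finite V] {U : Set V} (R : Setoid V) (A : Setoid U) :
    Nat.card (Quotient (R ⊔ extendSetoid U A)) +
      Nat.card (Quotient (Setoid.comap (Subtype.val : U → V) R)) =
    Nat.card (Quotient R) +
      Nat.card (Quotient (A ⊔ Setoid.comap (Subtype.val : U → V) R)) := by
  classical
  set R' := R ⊔ extendSetoid U A with hR'
  let π : Quotient R → Quotient R' :=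
    Quotient.lift (fun v => (Quotient.mk R' v)) fun v w h =>
      Quotient.sound (Setoid.le_def.mp le_sup_left h)
  set D : Set (Quotient R) := Set.range (Quotient.mk'' ∘ (Subtype.val : U → V)) with hD
  set D' : Set (Quotient R') := Set.range (Quotient.mk'' ∘ (Subtype.val : U → V)) with hD'
  have hcD : Nat.card (Quotient (Setoid.comap (Subtype.val : U → V) R)) = Nat.card D :=
    Nat.card_congr (Setoid.comapQuotientEquiv _ R)
  have hcD' : Nat.card (Quotient (A ⊔ Setoid.comap (Subtype.val : U → V) R)) = Nat.card D' := by
    rw [← comap_sup_extend R A]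
    exact Nat.card_congr (Setoid.comapQuotientEquiv _ R')
  -- π maps D into D', and preimage of D' is D
  have hπD : ∀ v : V, π (Quotient.mk R v) ∈ D' → Quotient.mk R v ∈ D := by
    intro v hv
    obtain ⟨u, hu⟩ := hv
    have hu' : R' u.val v := Quotient.exact hu
    rcases sup_extend_cases hu' with h | ⟨u1, u2, h1, h2, -⟩
    · exact ⟨u, Quotient.sound h⟩
    · exact ⟨u2, Quotient.sound (R.symm h2)⟩
  have hπD2 : ∀ q, q ∈ D → π q ∈ D' := by
    rintro q ⟨u, rfl⟩
    exact ⟨u, rfl⟩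
  -- bijection between complements
  have hinj : ∀ v w : V, π (Quotient.mk R v) = π (Quotient.mk R w) →
      (Quotient.mk R v : Quotient R) ∉ D → Quotient.mk R v = Quotient.mk R w := by
    intro v w h hv
    have h' : R' v w := Quotient.exact h
    rcases sup_extend_cases h' with h | ⟨u1, u2, h1, h2, -⟩
    · exact Quotient.sound h
    · exact absurd ⟨u1, Quotient.sound (R.symm h1)⟩ hv
  let f : (Dᶜ : Set (Quotient R)) → (D'ᶜ : Set (Quotient R')) := fun q =>
    ⟨π q.1, by
      obtain ⟨v, hv⟩ := Quotient.exists_rep q.1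
      intro hmem
      exact q.2 (hv ▸ hπD v (by rwa [hv]))⟩
  have hf : Function.Bijective f := by
    constructor
    · rintro ⟨q1, hq1⟩ ⟨q2, hq2⟩ h
      obtain ⟨v, rfl⟩ := Quotient.exists_rep q1
      obtain ⟨w, rfl⟩ := Quotient.exists_rep q2
      exact Subtype.ext (hinj v w (congrArg Subtype.val h) hq1)
    · rintro ⟨q', hq'⟩
      obtain ⟨v, rfl⟩ := Quotient.exists_rep q'
      refine ⟨⟨Quotient.mk R v, fun hmem => hq' (hπD2 _ hmem)⟩, rfl⟩
  have hsplit : Nat.card (Quotient R) = Nat.card D + Nat.card (Dᶜ : Set (Quotient R)) :=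
    ((Nat.card_congr (Equiv.Set.sumCompl D)).symm).trans Nat.card_sum
  have hsplit' : Nat.card (Quotient R') = Nat.card D' + Nat.card (D'ᶜ : Set (Quotient R')) :=
    ((Nat.card_congr (Equiv.Set.sumCompl D')).symm).trans Nat.card_sum
  have hcompl : Nat.card (Dᶜ : Set (Quotient R)) = Nat.card (D'ᶜ : Set (Quotient R')) :=
    Nat.card_congr (Equiv.ofBijective f hf)
  rw [hcD, hcD', hsplit, hsplit', hcompl]
  ring

lemma card_quot_bot {α : Type*} : Nat.card (Quotient (⊥ : Setoid α)) = Nat.card α :=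
  (Nat.card_congr (Equiv.ofBijective (Quotient.mk ⊥)
    ⟨fun _ _ h => Quotient.exact h, fun q => Quotient.exists_rep q⟩)).symm

lemma card_comap_le {α β : Type} [Finite β] (f : α → β) (r : Setoid β) :
    Nat.card (Quotient (Setoid.comap f r)) ≤ Nat.card (Quotient r) :=
  (Nat.card_congr (Setoid.comapQuotientEquiv f r)).trans_le
    (Nat.card_le_card_of_injective Subtype.val Subtype.val_injective)

namespace Multigraph

lemma contract_omega (K : Multigraph) {U : Set K.V} (A : Setoid U) (S : Finset K.E) :
    (K.contract A).omega S =
      Nat.card (Quotient (EqvGen.setoid (K.rel S) ⊔ extendSetoid U A)) := by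
  set E0 := extendSetoid U A with hE0
  set R2 := EqvGen.setoid (K.rel S) ⊔ E0 with hR2
  have key : ∀ v w : K.V, K.rel S v w →
      (Quotient.mk (EqvGen.setoid ((K.contract A).rel S)) (Quotient.mk E0 v)
        : Quotient (EqvGen.setoid ((K.contract A).rel S)))
      = Quotient.mk _ (Quotient.mk E0 w) := by
    intro v w hvw
    obtain ⟨e, he, hends⟩ := hvw
    refine Quotient.sound (EqvGen.rel _ _ ⟨e, he, ?_⟩)
    show (K.ends e).map (Quotient.mk E0) = s(Quotient.mk E0 v, Quotient.mk E0 w)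
    rw [hends, Sym2.map_pair_eq]
  refine Nat.card_congr (Equiv.ofBijective ?_ ?_).symm
  · -- map Quotient R2 → components of contract
    refine Quotient.lift (fun v =>
      (Quotient.mk (EqvGen.setoid ((K.contract A).rel S)) (Quotient.mk E0 v))) ?_
    intro v w h
    have hk : EqvGen.setoid (K.rel S) ⊔ E0 ≤ Setoid.ker (fun v : K.V =>
        (Quotient.mk (EqvGen.setoid ((K.contract A).rel S)) (Quotient.mk E0 v))) := by
      refine sup_le (Setoid.eqvGen_le key) ?_
      intro a b hab
      show Quotient.mk _ (Quotient.mk E0 a) = Quotient.mk _ (Quotient.mk E0 b)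
      rw [Quotient.sound hab]
    exact Setoid.le_def.mp hk h
  · constructor
    · -- injective
      intro q1 q2 h
      obtain ⟨v, rfl⟩ := Quotient.exists_rep q1
      obtain ⟨w, rfl⟩ := Quotient.exists_rep q2
      replace h : EqvGen ((K.contract A).rel S) (Quotient.mk E0 v) (Quotient.mk E0 w) :=
        Quotient.exact h
      apply Quotient.sound
      show (EqvGen.setoid (K.rel S) ⊔ E0) v w
      -- induct on the EqvGen chain in the contracted graph
      have main : ∀ p q : Quotient E0, EqvGen ((K.contract A).rel S) p q →
          ∀ a b : K.V, p = Quotient.mk E0 a → q = Quotient.mk E0 b →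
          (EqvGen.setoid (K.rel S) ⊔ E0) a b := by
        intro p q hpq
        induction hpq with
        | rel p q hr =>
          intro a b hpa hqb
          obtain ⟨e, he, hends⟩ := hr
          obtain ⟨c, d, hcd⟩ : ∃ c d, K.ends e = s(c, d) := by
            induction K.ends e using Sym2.ind with
            | _ c d => exact ⟨c, d, rfl⟩
          have : (K.ends e).map (Quotient.mk E0) = s(p, q) := hends
          rw [hcd, Sym2.map_pair_eq] at this
          have hcd' : (EqvGen.setoid (K.rel S) ⊔ E0) c d :=
            Setoid.le_def.mp le_sup_left (EqvGen.rel _ _ ⟨e, he, hcd⟩)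
          have hE : ∀ x y : K.V, Quotient.mk E0 x = Quotient.mk E0 y →
              (EqvGen.setoid (K.rel S) ⊔ E0) x y := fun x y hxy =>
            Setoid.le_def.mp le_sup_right (Quotient.exact hxy)
          subst hpa; subst hqb
          rcases Sym2.eq_iff.mp this with ⟨hp, hq⟩ | ⟨hp, hq⟩
          · exact Setoid.trans' _ (hE a c hp.symm)
              (Setoid.trans' _ hcd' (hE d b hq))
          · exact Setoid.trans' _ (hE a d hq.symm)
              (Setoid.trans' _ (Setoid.symm' _ hcd') (hE c b hp))
        | refl p =>
          intro a b hpa hqb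
          exact Setoid.le_def.mp le_sup_right (Quotient.exact (hpa.symm.trans hqb))
        | symm p q _ ih =>
          intro a b hpa hqb
          exact Setoid.symm' _ (ih b a hqb hpa)
        | trans p q r _ _ ih1 ih2 =>
          intro a b hpa hqb
          obtain ⟨c, hc⟩ := Quotient.exists_rep q
          exact Setoid.trans' _ (ih1 a c hpa hc.symm) (ih2 c b hc.symm hqb)
      exact main _ _ h v w rfl rfl
    · -- surjective
      intro q
      obtain ⟨p, rfl⟩ := Quotient.exists_rep q
      obtain ⟨v, rfl⟩ := Quotient.exists_rep p
      exact ⟨Quotient.mk R2 v, rfl⟩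

lemma contract_card_V (K : Multigraph) {U : Set K.V} (A : Setoid U) :
    Fintype.card (K.contract A).V + Nat.card U = Fintype.card K.V + nblocks A := by
  have hcomap : Setoid.comap (Subtype.val : U → K.V) (⊥ : Setoid K.V) = ⊥ := by
    apply Setoid.ext
    intro a b
    constructor
    · intro h
      have : a.val = b.val := h
      exact Subtype.ext this
    · rintro h
      have : a = b := h
      exact congrArg Subtype.val this
  have := card_sup_extend (⊥ : Setoid K.V) A
  rw [bot_sup_eq, hcomap, sup_bot_eq, card_quot_bot, card_quot_bot] at this
  have hV : Fintype.card (K.contract A).V = Nat.card (Quotient (extendSetoid U A)) := by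
    rw [← Nat.card_eq_fintype_card]; rfl
  have hV' : Fintype.card K.V = Nat.card K.V := (Nat.card_eq_fintype_card).symm
  rw [hV, hV', this]
  rfl

lemma contract_omegaG (K : Multigraph) {U : Set K.V} (A : Setoid U)
    (hK : K.omegaG = 1) (hU : Nonempty U) : (K.contract A).omegaG = 1 := by
  have h1 : (K.contract A).omegaG =
      Nat.card (Quotient (EqvGen.setoid (K.rel Finset.univ) ⊔ extendSetoid U A)) :=
    K.contract_omega A Finset.univ
  have hsurj : Function.Surjective
      (Quotient.lift (fun v => Quotient.mk (EqvGen.setoid (K.rel Finset.univ) ⊔ extendSetoid U A) v)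
        (fun v w h => Quotient.sound (Setoid.le_def.mp le_sup_left h)) :
        Quotient (EqvGen.setoid (K.rel Finset.univ)) → _) := by
    intro q
    obtain ⟨v, rfl⟩ := Quotient.exists_rep q
    exact ⟨Quotient.mk _ v, rfl⟩
  have hle : (K.contract A).omegaG ≤ 1 := by
    rw [h1, ← hK]
    exact Nat.card_le_card_of_surjective _ hsurj
  have hpos : 0 < (K.contract A).omegaG := by
    rw [h1]
    have : Nonempty (Quotient (EqvGen.setoid (K.rel Finset.univ) ⊔ extendSetoid U A)) :=
      ⟨Quotient.mk _ hU.some.val⟩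
    exact Nat.card_pos
  omega

end Multigraph

lemma nblocks_sup_add {α : Type} [Finite α] (A B : Setoid α) :
    nblocks A + nblocks B ≤ nblocks (A ⊔ B) + Nat.card α := by
  classical
  haveI instFE : Fintype α := Fintype.ofFinite _
  haveI instFV : Fintype (Quotient A ⊕ Quotient B) := Fintype.ofFinite _
  let N : Multigraph :=
    { V := Quotient A ⊕ Quotient B
      E := α
      finV := instFV
      finE := instFE
      ends := fun u => s(Sum.inl (Quotient.mk A u), Sum.inr (Quotient.mk B u)) }
  have hedge : ∀ u : α, N.rel Finset.univ (Sum.inl (Quotient.mk A u)) (Sum.inr (Quotient.mk B u)) :=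
    fun u => ⟨u, Finset.mem_univ u, rfl⟩
  have key : ∀ u u' : α, (A ⊔ B) u u' →
      EqvGen (N.rel Finset.univ) (Sum.inl (Quotient.mk A u)) (Sum.inl (Quotient.mk A u')) := by
    intro u u' h
    rw [Setoid.sup_eq_eqvGen] at h
    have h' : EqvGen (fun x y => A x y ∨ B x y) u u' := h
    clear h
    induction h' with
    | rel a b hab =>
      rcases hab with hab | hab
      · rw [Quotient.sound hab]
        exact EqvGen.refl _
      · refine (EqvGen.rel _ _ (hedge a)).trans _ _ _ ?_
        rw [Quotient.sound hab]
        exact EqvGen.symm _ _ (EqvGen.rel _ _ (hedge b))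
    | refl a => exact EqvGen.refl _
    | symm a b _ ih => exact EqvGen.symm _ _ ih
    | trans a b c _ _ ih1 ih2 => exact ih1.trans _ _ _ ih2
  have homega : N.omega Finset.univ ≤ nblocks (A ⊔ B) := by
    let φ : N.V → Quotient (A ⊔ B) :=
      Sum.elim
        (Quotient.lift (fun v => Quotient.mk (A ⊔ B) v)
          (fun a b h => Quotient.sound (Setoid.le_def.mp le_sup_left h)))
        (Quotient.lift (fun v => Quotient.mk (A ⊔ B) v)
          (fun a b h => Quotient.sound (Setoid.le_def.mp le_sup_right h)))
    have hφ : ∀ p q : N.V, EqvGen (N.rel Finset.univ) p q → φ p = φ q := by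
      intro p q hpq
      induction hpq with
      | rel p q hr =>
        obtain ⟨u, -, hends⟩ := hr
        rcases Sym2.eq_iff.mp hends with ⟨hp, hq⟩ | ⟨hp, hq⟩ <;> rw [← hp, ← hq] <;> rfl
      | refl p => rfl
      | symm p q _ ih => exact ih.symm
      | trans p q r _ _ ih1 ih2 => exact ih1.trans ih2
    let ψ : Quotient (EqvGen.setoid (N.rel Finset.univ)) → Quotient (A ⊔ B) :=
      Quotient.lift φ (fun p q h => hφ p q h)
    have hψ : Function.Injective ψ := by
      intro q1 q2 h
      obtain ⟨p1, rfl⟩ := Quotient.exists_rep q1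
      obtain ⟨p2, rfl⟩ := Quotient.exists_rep q2
      apply Quotient.sound
      show EqvGen (N.rel Finset.univ) p1 p2
      have conn : ∀ p : N.V, ∃ v : α,
          EqvGen (N.rel Finset.univ) p (Sum.inl (Quotient.mk A v)) ∧ φ p = Quotient.mk (A ⊔ B) v := by
        rintro (qa | qb)
        · obtain ⟨v, rfl⟩ := Quotient.exists_rep qa
          exact ⟨v, EqvGen.refl _, rfl⟩
        · obtain ⟨v, rfl⟩ := Quotient.exists_rep qb
          exact ⟨v, EqvGen.symm _ _ (EqvGen.rel _ _ (hedge v)), rfl⟩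
      obtain ⟨v1, hc1, he1⟩ := conn p1
      obtain ⟨v2, hc2, he2⟩ := conn p2
      have : (A ⊔ B) v1 v2 := Quotient.exact ((he1.symm.trans h).trans he2)
      exact (hc1.trans _ _ _ (key v1 v2 this)).trans _ _ _ (EqvGen.symm _ _ hc2)
    exact Nat.card_le_card_of_injective ψ hψ
  have hcard := N.card_le_omega_add_card_s15 Finset.univ
  have h1 : Fintype.card N.V = nblocks A + nblocks B := by
    rw [← Nat.card_eq_fintype_card]
    exact Nat.card_sum
  have h2 : (Finset.univ : Finset N.E).card = Nat.card α := by
    rw [Finset.card_univ, ← Nat.card_eq_fintype_card]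
  omega

/-- `T(K/A;x,1) = Σ_{B ∈ Γ(U)} δ · (x−1)^{|A∧B|−1} · T_B(K;x,1)` where
`δ = 1` iff `|A∧B| + n = |A| + |B|`. -/
theorem tutte_contract_expansion
    (K : Multigraph) (U : Set K.V) (n : ℕ) (hn : 1 ≤ n) (hU : Nat.card ↥U = n)
    (hK : K.omegaG = 1) (A : Setoid ↥U) (x : ℝ) :
    (K.contract A).tutte x 1 =
      ∑ B : Setoid ↥U,
        (if nblocks (A ⊔ B) + n = nblocks A + nblocks B then (1 : ℝ) else 0) *
          (x - 1) ^ (nblocks (A ⊔ B) - 1) * K.tutteAux U B x 1 := by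
  classical
  have hUne : Nonempty U := by
    have hpos : 0 < Nat.card ↥U := by omega
    exact (Nat.card_pos_iff.mp hpos).1
  have step1 : ∑ B : Setoid ↥U,
        (if nblocks (A ⊔ B) + n = nblocks A + nblocks B then (1 : ℝ) else 0) *
          (x - 1) ^ (nblocks (A ⊔ B) - 1) * K.tutteAux U B x 1
      = ∑ B : Setoid ↥U, ∑ S : Finset K.E,
          if K.part U S = B then
            (if nblocks (A ⊔ B) + n = nblocks A + nblocks B then (1 : ℝ) else 0) *
              (x - 1) ^ (nblocks (A ⊔ B) - 1) *
              ((x - 1) ^ (K.omega S - nblocks B) *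
                (1 - 1 : ℝ) ^ (K.omega S + S.card - Fintype.card K.V))
          else 0 := by
    refine Finset.sum_congr rfl fun B _ => ?_
    rw [Multigraph.tutteAux, Finset.mul_sum]
    refine Finset.sum_congr rfl fun S _ => ?_
    rw [mul_ite, mul_zero]
    rfl
  rw [step1, Finset.sum_comm]
  simp only [Finset.sum_ite_eq, Finset.mem_univ, if_true]
  rw [show (K.contract A).tutte x 1 = ∑ S : Finset K.E,
      (x - 1) ^ ((K.contract A).omega S - (K.contract A).omegaG) *
        (1 - 1 : ℝ) ^ ((K.contract A).omega S + S.card - Fintype.card (K.contract A).V)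
    from rfl]
  refine Finset.sum_congr rfl fun S _ => ?_
  have eq1 : (K.contract A).omega S + nblocks (K.part U S)
      = K.omega S + nblocks (A ⊔ K.part U S) := by
    rw [K.contract_omega A S]
    exact card_sup_extend (EqvGen.setoid (K.rel S)) A
  have eq2 : Fintype.card (K.contract A).V + n = Fintype.card K.V + nblocks A := by
    rw [← hU]; exact K.contract_card_V A
  have h3 : Fintype.card K.V ≤ K.omega S + S.card := K.card_le_omega_add_card_s15 S
  have h3' : Fintype.card (K.contract A).V ≤ (K.contract A).omega S + S.card :=
    (K.contract A).card_le_omega_add_card_s15 S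
  have h4 : nblocks (K.part U S) ≤ K.omega S := card_comap_le _ _
  have h5 : 1 ≤ nblocks (A ⊔ K.part U S) := by
    have : Nonempty (Quotient (A ⊔ K.part U S)) := ⟨Quotient.mk _ hUne.some⟩
    exact Nat.card_pos
  have h7 : nblocks A + nblocks (K.part U S) ≤ nblocks (A ⊔ K.part U S) + n := by
    rw [← hU]; exact nblocks_sup_add A _
  have hωG : (K.contract A).omegaG = 1 := K.contract_omegaG A hK hUne
  rw [hωG]
  have h0 : (1 - 1 : ℝ) = 0 := by norm_num
  rw [h0]
  by_cases hδ : nblocks (A ⊔ K.part U S) + n = nblocks A + nblocks (K.part U S)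
  · rw [if_pos hδ, one_mul]
    by_cases hF : K.omega S + S.card = Fintype.card K.V
    · have e1 : K.omega S + S.card - Fintype.card K.V = 0 := by omega
      have e2 : (K.contract A).omega S + S.card - Fintype.card (K.contract A).V = 0 := by omega
      simp only [e1, e2, pow_zero, mul_one]
      rw [← pow_add]
      congr 1
      omega
    · rw [zero_pow (by omega : K.omega S + S.card - Fintype.card K.V ≠ 0),
        zero_pow (by omega : (K.contract A).omega S + S.card - Fintype.card (K.contract A).V ≠ 0),
        mul_zero, mul_zero, mul_zero]
  · rw [if_neg hδ, zero_mul, zero_mul,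
      zero_pow (by omega : (K.contract A).omega S + S.card - Fintype.card (K.contract A).V ≠ 0),
      mul_zero]
end AuxLemmas
end

section
/- Let U be a finite nonempty set and let A, B be partitions of U. Then |A∧B| + |A∨B| ≥ |A| + |B|, where A∧B is the finest common coarsening of A and B and A∨B is the common refinement of A and B. In particular, since |A∨B| ≤ |U|, one has |A∧B| + |U| ≥ |A| + |B|. -/
attribute [local instance] Classical.propDecidable

open Relation

section Aux
variable {α : Type} [Finite α]

lemma card_quot_le_of_le' {s t : Setoid α} (h : s ≤ t) :
    Nat.card (Quotient t) ≤ Nat.card (Quotient s) :=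
  Nat.card_le_card_of_surjective (Setoid.map_of_le h)
    (fun q => Quotient.inductionOn q fun a => ⟨Quotient.mk s a, rfl⟩)

lemma card_quot_le_succ {s t : Setoid α} (hst : s ≤ t) (u v : α)
    (H : ∀ a b, t.r a b → s.r a b ∨ (s.r a u ∧ s.r v b) ∨ (s.r a v ∧ s.r u b)) :
    Nat.card (Quotient s) ≤ Nat.card (Quotient t) + 1 := by
  have hinj : Function.Injective
      (fun q : Quotient s => if q = Quotient.mk s v then Sum.inr () else
        Sum.inl (Setoid.map_of_le hst q) : Quotient s → Quotient t ⊕ Unit) := by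
    intro a b hab
    by_cases ha : a = Quotient.mk s v <;> by_cases hb : b = Quotient.mk s v <;>
      simp only [ha, hb, if_pos, if_neg, reduceIte] at hab
    · exact ha.trans hb.symm
    · exact absurd hab (by simp)
    · exact absurd hab (by simp)
    · obtain ⟨x, rfl⟩ := Quotient.exists_rep a
      obtain ⟨y, rfl⟩ := Quotient.exists_rep b
      simp only [Sum.inl.injEq] at hab
      have htxy : t.r x y := Quotient.exact hab
      rcases H x y htxy with h1 | ⟨h2, h3⟩ | ⟨h4, h5⟩
      · exact Quotient.sound h1
      · exact absurd ((Quotient.sound (s.symm h3)) : Quotient.mk s y = Quotient.mk s v) hb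
      · exact absurd ((Quotient.sound h4) : Quotient.mk s x = Quotient.mk s v) ha
  calc Nat.card (Quotient s) ≤ Nat.card (Quotient t ⊕ Unit) :=
        Nat.card_le_card_of_injective _ hinj
    _ = Nat.card (Quotient t) + 1 := by simp [Nat.card_sum]

/-- relation determined by a finset of ordered pairs -/
def frel (S : Finset (α × α)) : α → α → Prop := fun a b => (a, b) ∈ S

lemma comp_bound (S : Finset (α × α)) :
    Nat.card α ≤ Nat.card (Quotient (EqvGen.setoid (frel S))) + S.card := by
  classical
  induction S using Finset.induction_on with
  | empty =>
      have hconst : ∀ a b : α, EqvGen (frel (∅ : Finset (α × α))) a b → a = b := by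
        intro a b h
        induction h with
        | rel x y h => exact absurd h (by simp [frel])
        | refl => rfl
        | symm _ _ _ ih => exact ih.symm
        | trans _ _ _ _ _ ih1 ih2 => exact ih1.trans ih2
      have hsurj : Function.Surjective
          (Quotient.lift id hconst : Quotient (EqvGen.setoid (frel (∅ : Finset (α × α)))) → α) :=
        fun a => ⟨Quotient.mk _ a, rfl⟩
      simpa using Nat.card_le_card_of_surjective _ hsurj
  | @insert p S hp ih =>
      obtain ⟨u, v⟩ := p
      set s := EqvGen.setoid (frel S) with hs
      set t := EqvGen.setoid (frel (insert (u, v) S)) with ht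
      have hle : s ≤ t := Setoid.eqvGen_mono (by
        intro x y hxy; exact Finset.mem_insert_of_mem hxy)
      have H : ∀ a b, t.r a b → s.r a b ∨ (s.r a u ∧ s.r v b) ∨ (s.r a v ∧ s.r u b) := by
        intro a b h
        have h' : EqvGen (frel (insert (u, v) S)) a b := h
        clear h
        induction h' with
        | rel x y h =>
            have h' : (x, y) ∈ insert (u, v) S := h
            rcases Finset.mem_insert.1 h' with h'' | h''
            · rcases Prod.ext_iff.1 h'' with ⟨rfl, rfl⟩
              exact Or.inr (Or.inl ⟨s.refl _, s.refl _⟩)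
            · exact Or.inl (EqvGen.rel _ _ h'')
        | refl x => exact Or.inl (s.refl x)
        | symm x y _ ih =>
            rcases ih with h1 | ⟨h2, h3⟩ | ⟨h4, h5⟩
            · exact Or.inl (s.symm h1)
            · exact Or.inr (Or.inr ⟨s.symm h3, s.symm h2⟩)
            · exact Or.inr (Or.inl ⟨s.symm h5, s.symm h4⟩)
        | trans x y z _ _ ih1 ih2 =>
            rcases ih1 with h1 | ⟨h2, h3⟩ | ⟨h4, h5⟩ <;>
              rcases ih2 with g1 | ⟨g2, g3⟩ | ⟨g4, g5⟩
            · exact Or.inl (s.trans h1 g1)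
            · exact Or.inr (Or.inl ⟨s.trans h1 g2, g3⟩)
            · exact Or.inr (Or.inr ⟨s.trans h1 g4, g5⟩)
            · exact Or.inr (Or.inl ⟨h2, s.trans h3 g1⟩)
            · exact Or.inl (s.trans (s.trans h2 (s.symm (s.trans h3 g2))) g3)
            · exact Or.inl (s.trans h2 g5)
            · exact Or.inr (Or.inr ⟨h4, s.trans h5 g1⟩)
            · exact Or.inl (s.trans h4 g3)
            · exact Or.inl (s.trans (s.trans h4 (s.symm (s.trans h5 g4))) g5)
      have step := card_quot_le_succ hle u v H
      have hcard : (insert (u, v) S).card = S.card + 1 := Finset.card_insert_of_notMem hp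
      omega
end Aux

/-- for partitions `A, B` of a finite nonempty set,
`|A∧B| + |A∨B| ≥ |A| + |B|`; in particular `|A∧B| + |U| ≥ |A| + |B|`.
(`A∧B` is the finest common coarsening `A ⊔ B`, and `A∨B` the common refinement
`A ⊓ B`, in the setoid order where finer partitions are smaller.) -/
theorem partition_blocks_inequality
    (U : Type) [Fintype U] [Nonempty U] (A B : Setoid U) :
    nblocks A + nblocks B ≤ nblocks (A ⊔ B) + nblocks (A ⊓ B) ∧
    nblocks A + nblocks B ≤ nblocks (A ⊔ B) + Fintype.card U := by
  classical
  have hmain : nblocks A + nblocks B ≤ nblocks (A ⊔ B) + nblocks (A ⊓ B) := by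
    haveI : Fintype (Quotient (A ⊓ B)) := Fintype.ofFinite _
    let fA : Quotient (A ⊓ B) → Quotient A := Setoid.map_of_le inf_le_left
    let fB : Quotient (A ⊓ B) → Quotient B := Setoid.map_of_le inf_le_right
    set S : Finset ((Quotient A ⊕ Quotient B) × (Quotient A ⊕ Quotient B)) :=
      Finset.univ.image (fun c => (Sum.inl (fA c), Sum.inr (fB c))) with hS
    have hScard : S.card ≤ nblocks (A ⊓ B) := by
      calc S.card ≤ Finset.univ.card := Finset.card_image_le
        _ = nblocks (A ⊓ B) := by
            rw [nblocks, Nat.card_eq_fintype_card, Finset.card_univ]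
    have hedge : ∀ w : U, (EqvGen.setoid (frel S)).r
        (Sum.inl (Quotient.mk A w)) (Sum.inr (Quotient.mk B w)) := by
      intro w
      apply EqvGen.rel
      show (_, _) ∈ S
      exact Finset.mem_image.2 ⟨Quotient.mk (A ⊓ B) w, Finset.mem_univ _, rfl⟩
    have key : ∀ w w' : U, (A ⊔ B).r w w' → (EqvGen.setoid (frel S)).r
        (Sum.inl (Quotient.mk A w)) (Sum.inl (Quotient.mk A w')) := by
      intro w w' h
      have h' : EqvGen (fun a b => A.r a b ∨ B.r a b) w w' := by
        rw [Setoid.sup_eq_eqvGen] at h; exact h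
      clear h
      induction h' with
      | rel x y h =>
          rcases h with h | h
          · rw [Quotient.sound h]
          · have e1 := hedge x
            have e2 := hedge y
            have hb : (Quotient.mk B x) = Quotient.mk B y := Quotient.sound h
            rw [hb] at e1
            exact (EqvGen.setoid (frel S)).trans e1 ((EqvGen.setoid (frel S)).symm e2)
      | refl x => exact (EqvGen.setoid (frel S)).refl _
      | symm x y _ ih => exact (EqvGen.setoid (frel S)).symm ih
      | trans x y z _ _ ih1 ih2 => exact (EqvGen.setoid (frel S)).trans ih1 ih2
    let χ : (Quotient A ⊕ Quotient B) → Quotient (A ⊔ B) :=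
      Sum.elim (Setoid.map_of_le le_sup_left) (Setoid.map_of_le le_sup_right)
    have hconst : ∀ a b, EqvGen (frel S) a b → χ a = χ b := by
      intro a b h
      induction h with
      | rel x y h =>
          have h' : (x, y) ∈ S := h
          obtain ⟨c, -, rfl, rfl⟩ : ∃ c, c ∈ Finset.univ ∧
              Sum.inl (fA c) = x ∧ Sum.inr (fB c) = y := by
            obtain ⟨c, hc, he⟩ := Finset.mem_image.1 h'
            exact ⟨c, hc, congrArg Prod.fst he, congrArg Prod.snd he⟩
          obtain ⟨w, rfl⟩ := Quotient.exists_rep c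
          rfl
      | refl x => rfl
      | symm _ _ _ ih => exact ih.symm
      | trans _ _ _ _ _ ih1 ih2 => exact ih1.trans ih2
    let ψ : Quotient (EqvGen.setoid (frel S)) → Quotient (A ⊔ B) :=
      Quotient.lift χ hconst
    have hψ : Function.Injective ψ := by
      intro q q'
      obtain ⟨x, rfl⟩ := Quotient.exists_rep q
      obtain ⟨y, rfl⟩ := Quotient.exists_rep q'
      intro h
      apply Quotient.sound
      have hxy : χ x = χ y := h
      have link : ∀ (w w' : U), Quotient.mk (A ⊔ B) w = Quotient.mk (A ⊔ B) w' →
          (EqvGen.setoid (frel S)).r (Sum.inl (Quotient.mk A w)) (Sum.inl (Quotient.mk A w')) :=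
        fun w w' hw => key w w' (Quotient.exact hw)
      rcases x with a | a <;> rcases y with b | b <;>
        [ (obtain ⟨w, rfl⟩ := Quotient.exists_rep a; obtain ⟨w', rfl⟩ := Quotient.exists_rep b;
           exact link w w' hxy);
          (obtain ⟨w, rfl⟩ := Quotient.exists_rep a; obtain ⟨w', rfl⟩ := Quotient.exists_rep b;
           exact (EqvGen.setoid (frel S)).trans (link w w' hxy) (hedge w'));
          (obtain ⟨w, rfl⟩ := Quotient.exists_rep a; obtain ⟨w', rfl⟩ := Quotient.exists_rep b;
           exact (EqvGen.setoid (frel S)).trans ((EqvGen.setoid (frel S)).symm (hedge w))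
             (link w w' hxy));
          (obtain ⟨w, rfl⟩ := Quotient.exists_rep a; obtain ⟨w', rfl⟩ := Quotient.exists_rep b;
           exact (EqvGen.setoid (frel S)).trans ((EqvGen.setoid (frel S)).symm (hedge w))
             ((EqvGen.setoid (frel S)).trans (link w w' hxy) (hedge w'))) ]
    have h1 : Nat.card (Quotient (EqvGen.setoid (frel S))) ≤ nblocks (A ⊔ B) :=
      Nat.card_le_card_of_injective ψ hψ
    have h2 := comp_bound S
    have h3 : Nat.card (Quotient A ⊕ Quotient B) = nblocks A + nblocks B := Nat.card_sum
    rw [h3] at h2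
    omega
  refine ⟨hmain, le_trans hmain ?_⟩
  have : nblocks (A ⊓ B) ≤ Fintype.card U := by
    have h := Nat.card_le_card_of_surjective (Quotient.mk (A ⊓ B))
      (fun q => Quotient.exists_rep q)
    simpa [nblocks, Nat.card_eq_fintype_card] using h
  omega
end
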